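/- arXiv:2101.05660 — 5 statements merged into one kernel-verified Lean document; each statement's English description precedes it below -/
import Mathlib

section
/- Let φ : ℝⁿ → (0,∞) be a radial, radially decreasing measurable function with ∫_{ℝⁿ} φ dm = 1 satisfying the comparison condition sup{ φ_t(x)/φ(x) : t ∈ (0,1), ‖x‖ > 1 } < ∞. Let μ be a locally finite complex (or signed) Borel measure on ℝⁿ with (|μ| ∗ φ_{t₀})(0) < ∞ for some t₀ ∈ (0,∞), and let μ̃ be the restriction of μ to the closed ball {ξ : ‖ξ‖ ≤ t₀}. Then for every α > 0, lim (μ ∗ φ_t)(x) = lim (μ̃ ∗ φ_t)(x) as (x,t) → (0,0) within S(0,α) = {(x,t) : ‖x‖ < αt}, in the sense that whenever one of these nontangential limits exists, so does the other and they are equal. -/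
open MeasureTheory Metric Filter
open scoped ENNReal Topology NNReal

noncomputable section

abbrev Eu (n : ℕ) := EuclideanSpace ℝ (Fin n)

/-- The dilated kernel `φ_t(x) = t^{-n} φ(x/t)`. -/
def dil (n : ℕ) (φ : Eu n → ℝ) (t : ℝ) (x : Eu n) : ℝ := (t ^ n)⁻¹ * φ (t⁻¹ • x)

/-- radial and radially decreasing -/
def RadialDecr {n : ℕ} (φ : Eu n → ℝ) : Prop := ∀ x y : Eu n, ‖x‖ ≤ ‖y‖ → φ y ≤ φ x

/-- comparison condition -/
def CompCond (n : ℕ) (φ : Eu n → ℝ) : Prop :=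
  ∃ C : ℝ, ∀ t ∈ Set.Ioo (0:ℝ) 1, ∀ x : Eu n, 1 < ‖x‖ → dil n φ t x ≤ C * φ x

/-- convolution integral (μ ∗ φ_t)(x) for dμ = f dν -/
def convInt (n : ℕ) (ν : Measure (Eu n)) (f : Eu n → ℂ) (φ : Eu n → ℝ) (x : Eu n) (t : ℝ) : ℂ :=
  ∫ ξ, (dil n φ t (x - ξ) : ℂ) * f ξ ∂ν

lemma dil_pos {n : ℕ} {φ : Eu n → ℝ} (hφpos : ∀ x, 0 < φ x) {t : ℝ} (ht : 0 < t) (x : Eu n) :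
    0 < dil n φ t x := mul_pos (inv_pos.2 (pow_pos ht n)) (hφpos _)

lemma radial_neg {n : ℕ} {φ : Eu n → ℝ} (hφrad : RadialDecr φ) (x : Eu n) : φ (-x) = φ x :=
  le_antisymm (hφrad x (-x) (by simp)) (hφrad (-x) x (by simp))

lemma dil_meas {n : ℕ} {φ : Eu n → ℝ} (hφmeas : Measurable φ) (t : ℝ) (x : Eu n) :
    Measurable fun ξ : Eu n => dil n φ t (x - ξ) := by
  unfold dil
  exact measurable_const.mul (hφmeas.comp (by fun_prop))

lemma tail_tendsto {n : ℕ} {φ : Eu n → ℝ} (hint : Integrable φ) :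
    Tendsto (fun s : ℝ => ∫ v in (closedBall (0:Eu n) s)ᶜ, φ v) atTop (𝓝 0) := by
  have heq : ∀ s : ℝ, ∫ v in (closedBall (0:Eu n) s)ᶜ, φ v
      = ∫ v, ((closedBall (0:Eu n) s)ᶜ).indicator φ v :=
    fun s => (integral_indicator measurableSet_closedBall.compl).symm
  simp only [heq]
  have h := tendsto_integral_filter_of_dominated_convergence (μ := volume) (l := atTop)
      (F := fun s : ℝ => ((closedBall (0:Eu n) s)ᶜ).indicator φ) (f := fun _ => (0:ℝ))
      (fun v => ‖φ v‖)
      (Eventually.of_forall fun s =>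
        hint.aestronglyMeasurable.indicator measurableSet_closedBall.compl)
      (Eventually.of_forall fun s => Eventually.of_forall fun v =>
        norm_indicator_le_norm_self _ _)
      hint.norm
      (Eventually.of_forall fun v => ?_)
  · simpa using h
  · refine Tendsto.congr' ?_ tendsto_const_nhds
    filter_upwards [eventually_ge_atTop ‖v‖] with s hs
    refine (Set.indicator_of_notMem ?_ φ).symm
    simp only [Set.mem_compl_iff, not_not, mem_closedBall, dist_zero_right]
    exact hs

lemma dil_vanish {n : ℕ} (hn : 0 < n) {φ : Eu n → ℝ} (hφpos : ∀ x, 0 < φ x)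
    (hφrad : RadialDecr φ) (hint : Integrable φ) {u : Eu n} (hu : u ≠ 0) :
    Tendsto (fun t : ℝ => dil n φ t u) (𝓝[>] (0:ℝ)) (𝓝 0) := by
  haveI : Nontrivial (Eu n) :=
    Module.nontrivial_of_finrank_pos (R := ℝ) (by rw [finrank_euclideanSpace_fin]; exact hn)
  set V := (volume (ball (0:Eu n) 1)).toReal with hVdef
  have hVpos : 0 < V :=
    ENNReal.toReal_pos (measure_ball_pos _ _ one_pos).ne' measure_ball_lt_top.ne
  have hun : 0 < ‖u‖ := norm_pos_iff.2 hu
  have hhalf : ((1:ℝ)/2) ^ n < 1 := pow_lt_one₀ (by norm_num) (by norm_num) hn.ne'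
  set c := ‖u‖ ^ n * (1 - (1/2:ℝ) ^ n) * V with hcdef
  have hcpos : 0 < c := by
    apply mul_pos (mul_pos (pow_pos hun n) _) hVpos
    linarith
  have key : ∀ t : ℝ, 0 < t →
      dil n φ t u ≤ (∫ v in (closedBall (0:Eu n) (‖u‖/(2*t)))ᶜ, φ v) / c := by
    intro t ht
    set R := ‖u‖ / t with hRdef
    have hR : 0 < R := div_pos hun ht
    have hR2 : R / 2 = ‖u‖ / (2*t) := by rw [hRdef]; ring
    set A := ball (0:Eu n) R \ closedBall (0:Eu n) (R/2) with hAdef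
    have hAm : MeasurableSet A := measurableSet_ball.diff measurableSet_closedBall
    have hAfin : volume A ≠ ∞ :=
      ((measure_mono Set.diff_subset).trans_lt measure_ball_lt_top).ne
    have hvolA : (volume A).toReal = (R ^ n - (R/2) ^ n) * V := by
      have hsub : closedBall (0:Eu n) (R/2) ⊆ ball (0:Eu n) R :=
        closedBall_subset_ball (by linarith)
      rw [hAdef, measure_diff hsub measurableSet_closedBall.nullMeasurableSet
        measure_closedBall_lt_top.ne,
        Measure.addHaar_ball _ _ hR.le, Measure.addHaar_closedBall _ _ (by positivity : (0:ℝ) ≤ R/2),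
        finrank_euclideanSpace_fin, ← ENNReal.sub_mul (fun _ _ => measure_ball_lt_top.ne),
        ← ENNReal.ofReal_sub _ (by positivity),
        ENNReal.toReal_mul, ENNReal.toReal_ofReal (by nlinarith [pow_le_pow_left₀ (by positivity : (0:ℝ) ≤ R/2) (by linarith : R/2 ≤ R) n] )]
    have hnorm : ‖t⁻¹ • u‖ = R := by
      rw [norm_smul, Real.norm_eq_abs, abs_inv, abs_of_pos ht, hRdef, inv_mul_eq_div]
    have hlow : φ (t⁻¹ • u) * (volume A).toReal ≤ ∫ v in A, φ v := by
      refine setIntegral_ge_of_const_le_real hAm hAfin (fun v hv => ?_) hint.integrableOn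
      exact hφrad v (t⁻¹ • u) (by rw [hnorm]; exact le_of_lt (mem_ball_zero_iff.1 hv.1))
    have hup : ∫ v in A, φ v ≤ ∫ v in (closedBall (0:Eu n) (‖u‖/(2*t)))ᶜ, φ v := by
      rw [← hR2]
      refine setIntegral_mono_set hint.integrableOn
        (Eventually.of_forall fun v => (hφpos v).le) (HasSubset.Subset.eventuallyLE ?_)
      exact fun v hv => hv.2
    have hAc : (volume A).toReal = (t ^ n)⁻¹ * c := by
      rw [hvolA, hcdef, hRdef]
      field_simp
      have h : t ^ n * t⁻¹ ^ n = 1 := by rw [← mul_pow, mul_inv_cancel₀ ht.ne', one_pow]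
      linear_combination (‖u‖ ^ n - ‖u‖ ^ n * (1 / 2) ^ n) * h
    rw [le_div_iff₀ hcpos]
    calc dil n φ t u * c = φ (t⁻¹ • u) * ((t ^ n)⁻¹ * c) := by rw [dil]; ring
      _ = φ (t⁻¹ • u) * (volume A).toReal := by rw [hAc]
      _ ≤ ∫ v in A, φ v := hlow
      _ ≤ _ := hup
  have hcomp : Tendsto (fun t : ℝ => ‖u‖/(2*t)) (𝓝[>] (0:ℝ)) atTop := by
    have : (fun t : ℝ => ‖u‖/(2*t)) = fun t : ℝ => (‖u‖/2) * t⁻¹ := by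
      funext t; rw [div_eq_mul_inv, mul_inv, div_eq_mul_inv]; ring
    rw [this]
    exact Tendsto.const_mul_atTop (by positivity) tendsto_inv_nhdsGT_zero
  have htail : Tendsto (fun t : ℝ =>
      (∫ v in (closedBall (0:Eu n) (‖u‖/(2*t)))ᶜ, φ v) / c) (𝓝[>] (0:ℝ)) (𝓝 0) := by
    have := ((tail_tendsto hint).comp hcomp).div_const c
    simpa using this
  refine squeeze_zero' ?_ ?_ htail
  · filter_upwards [self_mem_nhdsWithin] with t ht
    exact (dil_pos hφpos ht u).le
  · filter_upwards [self_mem_nhdsWithin] with t ht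
    exact key t ht

theorem stmt7 {n : ℕ} (hn : 0 < n) (φ : Eu n → ℝ)
    (hφpos : ∀ x, 0 < φ x) (hφmeas : Measurable φ)
    (hφrad : RadialDecr φ) (hφint : ∫ x, φ x = 1)
    (hcomp : CompCond n φ)
    (ν : Measure (Eu n)) [IsLocallyFiniteMeasure ν]
    (f : Eu n → ℂ) (hf : Measurable f) (hf1 : ∀ ξ, ‖f ξ‖ = 1)
    (t₀ : ℝ) (ht₀ : 0 < t₀)
    (hfin : ∫⁻ ξ, ENNReal.ofReal (dil n φ t₀ (-ξ)) ∂ν < ⊤)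
    (α : ℝ) (hα : 0 < α) (L : ℂ) :
    Tendsto (fun p : Eu n × ℝ => convInt n ν f φ p.1 p.2)
        (𝓝[{p : Eu n × ℝ | 0 < p.2 ∧ dist p.1 0 < α * p.2}] ((0 : Eu n), 0)) (𝓝 L) ↔
      Tendsto (fun p : Eu n × ℝ =>
          convInt n (ν.restrict (closedBall (0 : Eu n) t₀)) f φ p.1 p.2)
        (𝓝[{p : Eu n × ℝ | 0 < p.2 ∧ dist p.1 0 < α * p.2}] ((0 : Eu n), 0)) (𝓝 L) := by
  classical
  haveI : Nontrivial (Eu n) :=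
    Module.nontrivial_of_finrank_pos (R := ℝ) (by rw [finrank_euclideanSpace_fin]; exact hn)
  have hφI : Integrable φ := by
    by_contra h
    rw [integral_undef h] at hφint
    exact one_ne_zero hφint.symm
  obtain ⟨C, hC⟩ := hcomp
  set S : Set (Eu n × ℝ) := {p : Eu n × ℝ | 0 < p.2 ∧ dist p.1 0 < α * p.2} with hSdef
  set l : Filter (Eu n × ℝ) := 𝓝[S] ((0 : Eu n), 0) with hldef
  set B : Set (Eu n) := closedBall (0 : Eu n) t₀ with hBdef
  -- C is positive
  have hCpos : 0 < C := by
    obtain ⟨v, hv⟩ := exists_ne (0 : Eu n)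
    have hvn : 0 < ‖v‖ := norm_pos_iff.2 hv
    set w : Eu n := (2 / ‖v‖) • v with hw
    have hwn : ‖w‖ = 2 := by
      rw [hw, norm_smul, Real.norm_eq_abs, abs_of_pos (by positivity)]
      field_simp
    have h1 := hC (1/2) (by norm_num) w (by rw [hwn]; norm_num)
    have h2 : 0 < dil n φ (1/2) w := dil_pos hφpos (by norm_num) w
    nlinarith [hφpos w]
  set C' : ℝ := 2 ^ n * C with hC'def
  have hC'pos : 0 < C' := by positivity
  set δ : ℝ := min (t₀ / 2) (t₀ / (2 * α)) with hδdef
  have hδpos : 0 < δ := lt_min (by positivity) (by positivity)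
  -- the key comparison inequality
  have hL2 : ∀ t : ℝ, 0 < t → t < δ → ∀ x : Eu n, ‖x‖ < α * t → ∀ ξ : Eu n, t₀ < ‖ξ‖ →
      dil n φ t (x - ξ) ≤ C' * dil n φ t₀ (-ξ) := by
    intro t ht htδ x hx ξ hξ
    have htt₀ : t < t₀ / 2 := htδ.trans_le (min_le_left _ _)
    have hαt : α * t < t₀ / 2 := by
      have : t < t₀ / (2 * α) := htδ.trans_le (min_le_right _ _)
      calc α * t < α * (t₀ / (2 * α)) := by
            exact mul_lt_mul_of_pos_left this hα
        _ = t₀ / 2 := by field_simp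
    have hxn : ‖x‖ < t₀ / 2 := hx.trans hαt
    have hxξ : t₀ / 2 < ‖x - ξ‖ := by
      have h1 : ‖ξ‖ - ‖x‖ ≤ ‖x - ξ‖ := by
        rw [norm_sub_rev]; exact norm_sub_norm_le ξ x
      linarith
    have hξ2 : ‖ξ‖ ≤ 2 * ‖x - ξ‖ := by
      have h1 : ‖ξ‖ - ‖x‖ ≤ ‖x - ξ‖ := by
        rw [norm_sub_rev]; exact norm_sub_norm_le ξ x
      have h2 : ‖x‖ < ‖x - ξ‖ := by
        calc ‖x‖ < t₀ / 2 := hxn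
          _ < ‖x - ξ‖ := hxξ
      linarith
    set s : ℝ := 2 * t / t₀ with hsdef
    set y : Eu n := (2 / t₀) • (x - ξ) with hydef
    have hs : s ∈ Set.Ioo (0:ℝ) 1 := by
      constructor
      · positivity
      · rw [hsdef, div_lt_one ht₀]; linarith
    have hyn : ‖y‖ = (2 / t₀) * ‖x - ξ‖ := by
      rw [hydef, norm_smul, Real.norm_eq_abs, abs_of_pos (by positivity)]
    have hy1 : 1 < ‖y‖ := by
      rw [hyn]
      calc (1:ℝ) = (2 / t₀) * (t₀ / 2) := by field_simp
        _ < (2 / t₀) * ‖x - ξ‖ := by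
            exact mul_lt_mul_of_pos_left hxξ (by positivity)
    have heq : dil n φ t (x - ξ) = (2 / t₀) ^ n * dil n φ s y := by
      unfold dil
      have h1 : s⁻¹ • y = t⁻¹ • (x - ξ) := by
        rw [hydef, smul_smul]
        congr 1
        rw [hsdef]
        field_simp
      rw [h1, ← mul_assoc]
      congr 1
      have hst : s = t * (2 / t₀) := by rw [hsdef]; ring
      rw [hst, mul_pow, mul_inv, ← mul_assoc, mul_comm ((2/t₀:ℝ)^n), mul_assoc,
        mul_inv_cancel₀ (by positivity : ((2:ℝ)/t₀)^n ≠ 0), mul_one]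
    have hφy : φ y ≤ φ (t₀⁻¹ • ξ) := by
      apply hφrad (t₀⁻¹ • ξ) y
      rw [hyn, norm_smul, Real.norm_eq_abs, abs_inv, abs_of_pos ht₀]
      rw [inv_mul_eq_div, div_le_iff₀ ht₀] at *
      calc ‖ξ‖ ≤ 2 * ‖x - ξ‖ := hξ2
        _ = 2 / t₀ * ‖x - ξ‖ * t₀ := by field_simp
    have hφyneg : φ (t₀⁻¹ • ξ) = φ (t₀⁻¹ • (-ξ)) := by
      rw [smul_neg, radial_neg hφrad]
    calc dil n φ t (x - ξ) = (2 / t₀) ^ n * dil n φ s y := heq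
      _ ≤ (2 / t₀) ^ n * (C * φ y) := by
          exact mul_le_mul_of_nonneg_left (hC s hs y hy1) (by positivity)
      _ ≤ (2 / t₀) ^ n * (C * φ (t₀⁻¹ • ξ)) := by
          exact mul_le_mul_of_nonneg_left
            (mul_le_mul_of_nonneg_left hφy hCpos.le) (by positivity)
      _ = C' * dil n φ t₀ (-ξ) := by
          unfold dil
          rw [hφyneg, hC'def, div_pow]
          field_simp
  -- eventual membership
  have hev : ∀ᶠ p : Eu n × ℝ in l, p ∈ S ∧ p.2 < δ := by
    have h1 : ∀ᶠ p : Eu n × ℝ in 𝓝 ((0 : Eu n), (0:ℝ)), p.2 < δ :=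
      (continuous_snd.tendsto _).eventually_lt_const hδpos
    exact eventually_mem_nhdsWithin.and (nhdsWithin_le_nhds h1)
  -- the dominating bound
  set bound : Eu n → ℝ≥0∞ := fun ξ => ENNReal.ofReal C' * ENNReal.ofReal (dil n φ t₀ (-ξ))
    with hbounddef
  have hboundfin : ∫⁻ ξ in Bᶜ, bound ξ ∂ν ≠ ∞ := by
    have h1 : ∫⁻ ξ in Bᶜ, bound ξ ∂ν
        = ENNReal.ofReal C' * ∫⁻ ξ in Bᶜ, ENNReal.ofReal (dil n φ t₀ (-ξ)) ∂ν := by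
      rw [hbounddef]
      exact lintegral_const_mul' _ _ ENNReal.ofReal_ne_top
    rw [h1]
    refine ENNReal.mul_ne_top ENNReal.ofReal_ne_top ?_
    exact ((lintegral_mono' Measure.restrict_le_self le_rfl).trans_lt hfin).ne
  have hbnd : ∀ p : Eu n × ℝ, p ∈ S → p.2 < δ →
      ∀ᵐ ξ ∂(ν.restrict Bᶜ), ENNReal.ofReal (dil n φ p.2 (p.1 - ξ)) ≤ bound ξ := by
    intro p hp hpδ
    refine (ae_restrict_iff' measurableSet_closedBall.compl).2
      (Eventually.of_forall fun ξ hξ => ?_)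
    have hξn : t₀ < ‖ξ‖ := by
      simpa [hBdef, mem_closedBall, dist_zero_right, not_le] using hξ
    have hx : ‖p.1‖ < α * p.2 := by
      have := hp.2
      rwa [dist_zero_right] at this
    have h := hL2 p.2 hp.1 hpδ p.1 hx ξ hξn
    calc ENNReal.ofReal (dil n φ p.2 (p.1 - ξ)) ≤ ENNReal.ofReal (C' * dil n φ t₀ (-ξ)) :=
          ENNReal.ofReal_le_ofReal h
      _ = bound ξ := ENNReal.ofReal_mul hC'pos.le
  -- key: the tail lintegral tends to zero
  have hkey : Tendsto (fun p : Eu n × ℝ =>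
      ∫⁻ ξ in Bᶜ, ENNReal.ofReal (dil n φ p.2 (p.1 - ξ)) ∂ν) l (𝓝 0) := by
    have h0 : (0:ℝ≥0∞) = ∫⁻ ξ in Bᶜ, (0:ℝ≥0∞) ∂ν := by simp
    rw [h0]
    refine tendsto_lintegral_filter_of_dominated_convergence bound ?_ ?_ hboundfin ?_
    · exact Eventually.of_forall fun p =>
        ENNReal.measurable_ofReal.comp (dil_meas hφmeas _ _)
    · filter_upwards [hev] with p hp
      exact hbnd p hp.1 hp.2
    · refine (ae_restrict_iff' measurableSet_closedBall.compl).2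
        (Eventually.of_forall fun ξ hξ => ?_)
      have hξn : t₀ < ‖ξ‖ := by
        simpa [hBdef, mem_closedBall, dist_zero_right, not_le] using hξ
      have hξ0 : ξ ≠ 0 := by
        intro h; rw [h, norm_zero] at hξn; linarith
      have hreal : Tendsto (fun p : Eu n × ℝ => dil n φ p.2 (p.1 - ξ)) l (𝓝 0) := by
        have h2t : Tendsto (fun p : Eu n × ℝ => 2 * p.2) l (𝓝[>] (0:ℝ)) := by
          rw [tendsto_nhdsWithin_iff]
          constructor
          · have h1 : Tendsto (fun p : Eu n × ℝ => p.2) l (𝓝 0) :=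
              (continuous_snd.tendsto _).mono_left nhdsWithin_le_nhds
            simpa using h1.const_mul (2:ℝ)
          · filter_upwards [eventually_mem_nhdsWithin] with p hp
            have : (0:ℝ) < p.2 := hp.1
            exact Set.mem_Ioi.2 (by positivity)
        have hb : Tendsto (fun p : Eu n × ℝ => 2 ^ n * dil n φ (2 * p.2) ξ) l (𝓝 0) := by
          have := ((dil_vanish hn hφpos hφrad hφI hξ0).comp h2t).const_mul ((2:ℝ) ^ n)
          simpa using this
        refine squeeze_zero' ?_ ?_ hb
        · filter_upwards [hev] with p hp
          exact (dil_pos hφpos hp.1.1 _).le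
        · filter_upwards [hev] with p hp
          obtain ⟨⟨ht, hd⟩, hpδ⟩ := hp
          have hx : ‖p.1‖ < α * p.2 := by rwa [dist_zero_right] at hd
          have hαt : α * p.2 < t₀ / 2 := by
            have h1 : p.2 < t₀ / (2 * α) := hpδ.trans_le (min_le_right _ _)
            calc α * p.2 < α * (t₀ / (2 * α)) := mul_lt_mul_of_pos_left h1 hα
              _ = t₀ / 2 := by field_simp
          have hxn : ‖p.1‖ < t₀ / 2 := hx.trans hαt
          have hxξ2 : ‖ξ‖ ≤ 2 * ‖p.1 - ξ‖ := by
            have h1 : ‖ξ‖ - ‖p.1‖ ≤ ‖p.1 - ξ‖ := by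
              rw [norm_sub_rev]; exact norm_sub_norm_le ξ p.1
            have h2 : ‖p.1‖ < ‖ξ‖ / 2 := by linarith
            linarith
          have hmono : φ (p.2⁻¹ • (p.1 - ξ)) ≤ φ ((2 * p.2)⁻¹ • ξ) := by
            apply hφrad ((2 * p.2)⁻¹ • ξ) (p.2⁻¹ • (p.1 - ξ))
            rw [norm_smul, norm_smul, Real.norm_eq_abs, Real.norm_eq_abs,
              abs_inv, abs_inv, abs_of_pos ht, abs_of_pos (by positivity : (0:ℝ) < 2 * p.2)]
            rw [inv_mul_eq_div, inv_mul_eq_div, div_le_div_iff₀ (by positivity) ht]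
            calc ‖ξ‖ * p.2 ≤ 2 * ‖p.1 - ξ‖ * p.2 := by nlinarith
              _ = ‖p.1 - ξ‖ * (2 * p.2) := by ring
          calc dil n φ p.2 (p.1 - ξ) = (p.2 ^ n)⁻¹ * φ (p.2⁻¹ • (p.1 - ξ)) := rfl
            _ ≤ (p.2 ^ n)⁻¹ * φ ((2 * p.2)⁻¹ • ξ) := by
                exact mul_le_mul_of_nonneg_left hmono (by positivity)
            _ = 2 ^ n * dil n φ (2 * p.2) ξ := by
                unfold dil
                generalize φ ((2 * p.2)⁻¹ • ξ) = a
                rw [mul_pow]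
                have h2 : ((2:ℝ) ^ n) ≠ 0 := by positivity
                have hp2 : (p.2 : ℝ) ^ n ≠ 0 := by positivity
                field_simp
      have := (ENNReal.continuous_ofReal.tendsto 0).comp hreal
      simpa [Function.comp_def] using this
  -- the difference tends to zero
  have hg : Tendsto (fun p : Eu n × ℝ =>
      (∫⁻ ξ in Bᶜ, ENNReal.ofReal (dil n φ p.2 (p.1 - ξ)) ∂ν).toReal) l (𝓝 0) := by
    have := (ENNReal.tendsto_toReal (by simp : (0:ℝ≥0∞) ≠ ⊤)).comp hkey
    simpa [Function.comp_def] using this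
  have hdiff : Tendsto (fun p : Eu n × ℝ =>
      convInt n ν f φ p.1 p.2 - convInt n (ν.restrict B) f φ p.1 p.2) l (𝓝 0) := by
    rw [tendsto_zero_iff_norm_tendsto_zero]
    refine squeeze_zero' (Eventually.of_forall fun p => norm_nonneg _) ?_ hg
    filter_upwards [hev] with p hp
    obtain ⟨hpS, hpδ⟩ := hp
    have ht : 0 < p.2 := hpS.1
    set g₀ : Eu n → ℂ := fun ξ => (dil n φ p.2 (p.1 - ξ) : ℂ) * f ξ with hg₀def
    have hg₀meas : Measurable g₀ :=
      (Complex.measurable_ofReal.comp (dil_meas hφmeas _ _)).mul hf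
    have hnorm : ∀ ξ, ‖g₀ ξ‖ = dil n φ p.2 (p.1 - ξ) := fun ξ => by
      rw [hg₀def, norm_mul, hf1, mul_one, Complex.norm_real, Real.norm_eq_abs,
        abs_of_pos (dil_pos hφpos ht _)]
    have hlintnorm : ∫⁻ ξ in Bᶜ, ENNReal.ofReal ‖g₀ ξ‖ ∂ν
        = ∫⁻ ξ in Bᶜ, ENNReal.ofReal (dil n φ p.2 (p.1 - ξ)) ∂ν := by
      refine lintegral_congr fun ξ => ?_
      rw [hnorm]
    have houtfin : IntegrableOn g₀ Bᶜ ν := by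
      constructor
      · exact hg₀meas.aestronglyMeasurable
      · rw [hasFiniteIntegral_iff_norm, hlintnorm]
        calc ∫⁻ ξ in Bᶜ, ENNReal.ofReal (dil n φ p.2 (p.1 - ξ)) ∂ν
            ≤ ∫⁻ ξ in Bᶜ, bound ξ ∂ν := lintegral_mono_ae (hbnd p hpS hpδ)
          _ < ⊤ := hboundfin.lt_top
    have hJle : ‖∫ ξ in Bᶜ, g₀ ξ ∂ν‖
        ≤ (∫⁻ ξ in Bᶜ, ENNReal.ofReal (dil n φ p.2 (p.1 - ξ)) ∂ν).toReal := by
      calc ‖∫ ξ in Bᶜ, g₀ ξ ∂ν‖ ≤ (∫⁻ ξ in Bᶜ, ENNReal.ofReal ‖g₀ ξ‖ ∂ν).toReal :=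
            norm_integral_le_lintegral_norm _
        _ = _ := by rw [hlintnorm]
    by_cases hI : IntegrableOn g₀ B ν
    · have hInt : Integrable g₀ ν := by
        rw [← integrableOn_univ, ← Set.union_compl_self B]
        exact hI.union houtfin
      have hsplit : convInt n ν f φ p.1 p.2 - convInt n (ν.restrict B) f φ p.1 p.2
          = ∫ ξ in Bᶜ, g₀ ξ ∂ν := by
        have h1 : (∫ ξ in B, g₀ ξ ∂ν) + ∫ ξ in Bᶜ, g₀ ξ ∂ν = ∫ ξ, g₀ ξ ∂ν :=
          integral_add_compl measurableSet_closedBall hInt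
        show (∫ ξ, g₀ ξ ∂ν) - ∫ ξ in B, g₀ ξ ∂ν = ∫ ξ in Bᶜ, g₀ ξ ∂ν
        rw [← h1]; ring
      rw [hsplit]
      exact hJle
    · have h1 : convInt n ν f φ p.1 p.2 = 0 :=
        integral_undef fun h => hI h.integrableOn
      have h2 : convInt n (ν.restrict B) f φ p.1 p.2 = 0 := integral_undef hI
      rw [show convInt n ν f φ p.1 p.2 - convInt n (ν.restrict B) f φ p.1 p.2 = 0 by
        rw [h1, h2, sub_zero]]
      simp [ENNReal.toReal_nonneg]
  -- conclude
  constructor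
  · intro h
    have h2 := h.sub hdiff
    rw [sub_zero] at h2
    refine h2.congr fun p => ?_
    ring
  · intro h
    have h2 := h.add hdiff
    rw [add_zero] at h2
    refine h2.congr fun p => ?_
    ring
end
end

section
/- Let μ be a locally finite complex (or signed) Borel measure on ℝⁿ. If x₀ ∈ ℝⁿ is a σ-point of μ with D_σμ(x₀) = L ∈ ℂ, then the strong derivative of μ at x₀ exists and equals L; that is, for every open ball B ⊂ ℝⁿ, lim_{r→0} μ(x₀ + rB)/m(rB) = L. -/
open MeasureTheory Metric Filter
open scoped ENNReal Topology NNReal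

noncomputable section

/-- σ-point of the measure dμ = f dν, with D_σ μ(x₀) = L -/
def IsSigmaPt (n : ℕ) (ν : Measure (Eu n)) (f : Eu n → ℂ) (x₀ : Eu n) (L : ℂ) : Prop :=
  ∀ ε > 0, ∃ δ > 0, ∀ (x : Eu n) (r : ℝ), 0 < r → dist x x₀ < δ → r < δ →
    ‖(∫ ξ in ball x r, f ξ ∂ν) - L * ((volume (ball x r)).toReal : ℂ)‖
      < ε * (dist x x₀ + r) ^ n

/-- μ has strong derivative L at x₀: for every open ball B = B(y,s),
`μ(x₀ + rB)/m(rB) → L` as `r → 0⁺`; here `x₀ + r·B(y,s) = B(x₀ + ry, rs)`. -/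
def HasStrongDeriv (n : ℕ) (ν : Measure (Eu n)) (f : Eu n → ℂ) (x₀ : Eu n) (L : ℂ) : Prop :=
  ∀ (y : Eu n) (s : ℝ), 0 < s →
    Tendsto (fun r : ℝ =>
        (∫ ξ in ball (x₀ + r • y) (r * s), f ξ ∂ν) /
          ((volume (ball (x₀ + r • y) (r * s))).toReal : ℂ))
      (𝓝[>] 0) (𝓝 L)

/-- A σ-point of μ is a point where the strong derivative exists, with the same value. -/
theorem stmt11 {n : ℕ} (hn : 0 < n)
    (ν : Measure (Eu n)) [IsLocallyFiniteMeasure ν]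
    (f : Eu n → ℂ) (hf : Measurable f) (hf1 : ∀ ξ, ‖f ξ‖ = 1)
    (x₀ : Eu n) (L : ℂ) (hσ : IsSigmaPt n ν f x₀ L) :
    HasStrongDeriv n ν f x₀ L := by
  haveI : Nontrivial (Eu n) := Module.nontrivial_of_finrank_pos (R := ℝ)
    (by rw [finrank_euclideanSpace_fin]; exact hn)
  intro y s hs
  rw [Metric.tendsto_nhdsWithin_nhds]
  intro ε' hε'
  set c := (volume (ball (0 : Eu n) 1)).toReal with hc_def
  have hc : 0 < c :=
    ENNReal.toReal_pos (measure_ball_pos _ _ one_pos).ne' measure_ball_lt_top.ne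
  have hys : 0 < ‖y‖ + s := by positivity
  have hεpos : 0 < ε' * (s ^ n * c) / (‖y‖ + s) ^ n := by positivity
  obtain ⟨δ₀, hδ₀, H⟩ := hσ _ hεpos
  refine ⟨δ₀ / (‖y‖ + s + 1), by positivity, fun r hr hrd => ?_⟩
  have hr0 : 0 < r := hr
  rw [Real.dist_eq, sub_zero, abs_of_pos hr0] at hrd
  have hrδ : r * (‖y‖ + s + 1) < δ₀ := (lt_div_iff₀ (by positivity)).mp hrd
  have hrs : 0 < r * s := mul_pos hr0 hs
  have hdist : dist (x₀ + r • y) x₀ = r * ‖y‖ := by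
    rw [dist_eq_norm, add_sub_cancel_left, norm_smul, Real.norm_of_nonneg hr0.le]
  have h1 : dist (x₀ + r • y) x₀ < δ₀ := by
    rw [hdist]; nlinarith [norm_nonneg y]
  have h2 : r * s < δ₀ := by nlinarith [norm_nonneg y]
  have key := H (x₀ + r • y) (r * s) hrs h1 h2
  have hV : ((volume (ball (x₀ + r • y) (r * s))).toReal) = (r * s) ^ n * c := by
    rw [Measure.addHaar_ball _ _ hrs.le, ENNReal.toReal_mul,
      ENNReal.toReal_ofReal (by positivity)]
    simp [finrank_euclideanSpace_fin]
    exact Or.inl hc_def.symm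
  have hVpos : 0 < (r * s) ^ n * c := by positivity
  rw [hV, hdist] at key
  rw [dist_eq_norm, hV]
  set I := ∫ ξ in ball (x₀ + r • y) (r * s), f ξ ∂ν with hI
  have hVne : ((((r * s) ^ n * c : ℝ)) : ℂ) ≠ 0 := by exact_mod_cast hVpos.ne'
  have hq : (I - L * ((((r * s) ^ n * c : ℝ)) : ℂ)) / ((((r * s) ^ n * c : ℝ)) : ℂ)
      = I / ((((r * s) ^ n * c : ℝ)) : ℂ) - L := by
    rw [sub_div, mul_div_assoc, div_self hVne, mul_one]
  rw [← hq, norm_div, Complex.norm_real, Real.norm_of_nonneg hVpos.le, div_lt_iff₀ hVpos]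
  calc ‖I - L * ((((r * s) ^ n * c : ℝ)) : ℂ)‖
      < ε' * (s ^ n * c) / (‖y‖ + s) ^ n * (r * ‖y‖ + r * s) ^ n := key
    _ = ε' * ((r * s) ^ n * c) := by
        have : (r * ‖y‖ + r * s) ^ n = r ^ n * (‖y‖ + s) ^ n := by
          rw [← mul_pow]; ring_nf
        rw [this]
        field_simp
        ring
  done

end
end

section
/- Let μ be a locally finite signed Borel measure on ℝ and let f : ℝ → ℝ be a function (of locally bounded variation) such that μ((a,b]) = f(b) − f(a) for all real a < b. Then for x₀ ∈ ℝ and L ∈ ℝ: f is differentiable at x₀ with f′(x₀) = L if and only if x₀ is a σ-point of μ with D_σμ(x₀) = L. -/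
open MeasureTheory Metric Filter
open scoped ENNReal Topology NNReal

noncomputable section

/-- σ-point of the locally finite signed measure dμ = g dν on ℝ, with D_σ μ(x₀) = L. -/
def IsSigmaPtR (ν : Measure ℝ) (g : ℝ → ℝ) (x₀ : ℝ) (L : ℝ) : Prop :=
  ∀ ε > 0, ∃ δ > 0, ∀ (x r : ℝ), 0 < r → |x - x₀| < δ → r < δ →
    |(∫ ξ in ball x r, g ξ ∂ν) - L * (volume (ball x r)).toReal| < ε * (|x - x₀| + r)

namespace SigmaPtAux

lemma fin_Ioo (ν : Measure ℝ) [IsLocallyFiniteMeasure ν] (a b : ℝ) : ν (Set.Ioo a b) < ⊤ :=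
  (measure_mono Set.Ioo_subset_Icc_self).trans_lt measure_Icc_lt_top

lemma fin_Ioc (ν : Measure ℝ) [IsLocallyFiniteMeasure ν] (a b : ℝ) : ν (Set.Ioc a b) < ⊤ :=
  (measure_mono Set.Ioc_subset_Icc_self).trans_lt measure_Icc_lt_top

lemma intOn (ν : Measure ℝ) {g : ℝ → ℝ} (hg : Measurable g) (hg1 : ∀ ξ, |g ξ| = 1)
    {s : Set ℝ} (hs : ν s ≠ ⊤) : IntegrableOn g s ν :=
  Measure.integrableOn_of_bounded hs hg.aestronglyMeasurable
    (Eventually.of_forall fun ξ => by rw [Real.norm_eq_abs, hg1 ξ])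

lemma int_bound (ν : Measure ℝ) {g : ℝ → ℝ} (hg1 : ∀ ξ, |g ξ| = 1) (s : Set ℝ) :
    |∫ ξ in s, g ξ ∂ν| ≤ (ν s).toReal := by
  calc |∫ ξ in s, g ξ ∂ν| ≤ ∫ ξ in s, ‖g ξ‖ ∂ν := by
        rw [← Real.norm_eq_abs]; exact norm_integral_le_integral_norm _
    _ = ∫ ξ in s, (1 : ℝ) ∂ν := by
        refine integral_congr_ae (Eventually.of_forall fun ξ => ?_)
        simp [Real.norm_eq_abs, hg1 ξ]
    _ = (ν s).toReal := by simp; rfl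

/-- Splitting the integral over an open interval. -/
lemma decomp (ν : Measure ℝ) [IsLocallyFiniteMeasure ν] {g : ℝ → ℝ} (hg : Measurable g)
    (hg1 : ∀ ξ, |g ξ| = 1) {a m b : ℝ} (h1 : a < m) (h2 : m < b) :
    ∫ ξ in Set.Ioo a b, g ξ ∂ν
      = (∫ ξ in Set.Ioc a m, g ξ ∂ν) + ∫ ξ in Set.Ioo m b, g ξ ∂ν := by
  rw [← Set.Ioc_union_Ioo_eq_Ioo h1.le h2]
  refine setIntegral_union ?_ measurableSet_Ioo
    (intOn ν hg hg1 (fin_Ioc ν a m).ne) (intOn ν hg hg1 (fin_Ioo ν m b).ne)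
  rw [Set.disjoint_left]
  rintro ξ ⟨-, h⟩ ⟨h', -⟩
  exact absurd h' (not_lt.mpr h)

lemma tendsto_aux (c : ℝ) : Tendsto (fun n : ℕ => c / (n + 2)) atTop (𝓝 0) := by
  have h := (tendsto_const_div_atTop_nhds_zero_nat c).comp (tendsto_add_atTop_nat 2)
  convert h using 2 with n
  simp [Function.comp]

lemma approx_left (ν : Measure ℝ) [IsLocallyFiniteMeasure ν] (a b : ℝ) (hab : a < b)
    (η : ℝ) (hη : 0 < η) :
    ∃ b', a < b' ∧ b' < b ∧ (ν (Set.Ioo b' b)).toReal < η ∧ b - b' < η := by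
  set u : ℕ → ℝ := fun n => (b - a) / (n + 2) with hu_def
  have hu : Tendsto u atTop (𝓝 0) := tendsto_aux (b - a)
  have hupos : ∀ n, 0 < u n := fun n => div_pos (by linarith) (by positivity)
  have hub : ∀ n, u n < b - a := fun n => by
    rw [hu_def, div_lt_iff₀ (by positivity)]
    nlinarith [Nat.cast_nonneg (α := ℝ) n]
  set s : ℕ → Set ℝ := fun n => Set.Ioo (b - u n) b with hs_def
  have hanti : Antitone s := by
    intro n m hnm
    apply Set.Ioo_subset_Ioo_left
    have : u m ≤ u n := by
      rw [hu_def]; dsimp only; gcongr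
      all_goals first
        | linarith
        | exact_mod_cast hnm
    linarith
  have hempty : ⋂ n, s n = ∅ := by
    rw [Set.eq_empty_iff_forall_notMem]
    intro x hx
    simp only [Set.mem_iInter, hs_def, Set.mem_Ioo] at hx
    have hxb : x < b := (hx 0).2
    obtain ⟨n, hn⟩ := (hu.eventually_lt_const (show (0:ℝ) < b - x by linarith)).exists
    linarith [(hx n).1]
  have hms := tendsto_measure_iInter_atTop (μ := ν)
    (fun n => measurableSet_Ioo.nullMeasurableSet) hanti ⟨0, (fin_Ioo ν _ _).ne⟩
  rw [hempty, measure_empty] at hms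
  have hmt : Tendsto (fun n => (ν (s n)).toReal) atTop (𝓝 0) := by
    have := (ENNReal.tendsto_toReal (by simp)).comp hms
    exact this
  obtain ⟨n, h1, h2⟩ := ((hmt.eventually_lt_const hη).and (hu.eventually_lt_const hη)).exists
  exact ⟨b - u n, by linarith [hub n], by linarith [hupos n], h1, by simpa using h2⟩

lemma approx_right (ν : Measure ℝ) [IsLocallyFiniteMeasure ν] (b c : ℝ) (hbc : b < c)
    (η : ℝ) (hη : 0 < η) :
    ∃ c', b < c' ∧ c' < c ∧ (ν (Set.Ioc b c')).toReal < η ∧ c' - b < η := by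
  set u : ℕ → ℝ := fun n => (c - b) / (n + 2) with hu_def
  have hu : Tendsto u atTop (𝓝 0) := tendsto_aux (c - b)
  have hupos : ∀ n, 0 < u n := fun n => div_pos (by linarith) (by positivity)
  have hub : ∀ n, u n < c - b := fun n => by
    rw [hu_def, div_lt_iff₀ (by positivity)]
    nlinarith [Nat.cast_nonneg (α := ℝ) n]
  set s : ℕ → Set ℝ := fun n => Set.Ioc b (b + u n) with hs_def
  have hanti : Antitone s := by
    intro n m hnm
    apply Set.Ioc_subset_Ioc_right
    have : u m ≤ u n := by
      rw [hu_def]; dsimp only; gcongr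
      all_goals first
        | linarith
        | exact_mod_cast hnm
    linarith
  have hempty : ⋂ n, s n = ∅ := by
    rw [Set.eq_empty_iff_forall_notMem]
    intro x hx
    simp only [Set.mem_iInter, hs_def, Set.mem_Ioc] at hx
    have hxb : b < x := (hx 0).1
    obtain ⟨n, hn⟩ := (hu.eventually_lt_const (show (0:ℝ) < x - b by linarith)).exists
    linarith [(hx n).2]
  have hms := tendsto_measure_iInter_atTop (μ := ν)
    (fun n => measurableSet_Ioc.nullMeasurableSet) hanti ⟨0, (fin_Ioc ν _ _).ne⟩
  rw [hempty, measure_empty] at hms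
  have hmt : Tendsto (fun n => (ν (s n)).toReal) atTop (𝓝 0) := by
    have := (ENNReal.tendsto_toReal (by simp)).comp hms
    exact this
  obtain ⟨n, h1, h2⟩ := ((hmt.eventually_lt_const hη).and (hu.eventually_lt_const hη)).exists
  exact ⟨b + u n, by linarith [hupos n], by linarith [hub n], h1, by simpa using h2⟩

/-- key estimate for the backward direction. -/
lemma Ioc_est (ν : Measure ℝ) [IsLocallyFiniteMeasure ν]
    {g : ℝ → ℝ} (hg : Measurable g) (hg1 : ∀ ξ, |g ξ| = 1)
    (f : ℝ → ℝ)
    (hμf : ∀ a b : ℝ, a < b → (∫ ξ in Set.Ioc a b, g ξ ∂ν) = f b - f a)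
    (x₀ L ε δ : ℝ) (hε : 0 < ε) (hδ : 0 < δ)
    (H : ∀ x r : ℝ, 0 < r → |x - x₀| < δ → r < δ →
      |(∫ ξ in ball x r, g ξ ∂ν) - L * (volume (ball x r)).toReal| < ε * (|x - x₀| + r))
    (p q : ℝ) (hpq : p < q) (hp : |p - x₀| < δ / 2) (hq : |q - x₀| < δ / 2) :
    |f q - f p - L * (q - p)| ≤ 2 * ε * (|p - x₀| + |q - x₀| + (q - p)) := by
  have hLpos : (0:ℝ) < 1 + |L| := by positivity
  set η₂ : ℝ := min (q - p) (ε * (q - p) / (1 + |L|)) with hη₂_def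
  have hη₂pos : 0 < η₂ := lt_min (by linarith) (div_pos (mul_pos hε (by linarith)) hLpos)
  have hη₂qp : η₂ ≤ q - p := min_le_left _ _
  have hη₂L : η₂ * (1 + |L|) ≤ ε * (q - p) := by
    calc η₂ * (1 + |L|) ≤ (ε * (q - p) / (1 + |L|)) * (1 + |L|) := by
          gcongr; exact min_le_right _ _
      _ = ε * (q - p) := div_mul_cancel₀ _ hLpos.ne'
  set η₃ : ℝ := min (δ / 2) η₂ with hη₃_def
  have hη₃pos : 0 < η₃ := lt_min (by linarith) hη₂pos
  obtain ⟨q', hqq', hq'lt, hν, hq'q⟩ := approx_right ν q (q + η₃) (by linarith) η₂ hη₂pos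
  have hq'q3 : q' - q < η₃ := by linarith
  have hq'qδ : q' - q < δ / 2 := lt_of_lt_of_le hq'q3 (min_le_left _ _)
  have hq'q2 : q' - q ≤ η₂ := le_trans hq'q3.le (min_le_right _ _)
  -- the ball
  set x : ℝ := (p + q') / 2 with hx_def
  set r : ℝ := (q' - p) / 2 with hr_def
  have hrpos : 0 < r := by rw [hr_def]; linarith
  have hpabs := abs_lt.mp hp
  have hqabs := abs_lt.mp hq
  have hq'abs : |q' - x₀| ≤ |q - x₀| + (q' - q) := by
    rw [show q' - x₀ = (q - x₀) + (q' - q) by ring]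
    exact (abs_add_le _ _).trans (by rw [abs_of_pos (show (0:ℝ) < q' - q by linarith)])
  have hxabs : |x - x₀| ≤ (|p - x₀| + |q' - x₀|) / 2 := by
    rw [show x - x₀ = ((p - x₀) + (q' - x₀)) / 2 by rw [hx_def]; ring, abs_div, abs_two]
    gcongr
    exact abs_add_le _ _
  have hq'δ : |q' - x₀| < δ := by
    refine lt_of_le_of_lt hq'abs ?_
    linarith
  have hxδ : |x - x₀| < δ := by
    refine lt_of_le_of_lt hxabs ?_
    linarith
  have hrδ : r < δ := by
    have h1 := le_abs_self (q' - x₀)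
    have h2 := neg_abs_le (p - x₀)
    rw [hr_def]
    linarith
  have hball : ball x r = Set.Ioo p q' := by
    rw [Real.ball_eq_Ioo]
    have e1 : x - r = p := by rw [hx_def, hr_def]; ring
    have e2 : x + r = q' := by rw [hx_def, hr_def]; ring
    rw [e1, e2]
  have hvol : (volume (ball x r)).toReal = q' - p := by
    rw [Real.volume_ball, ENNReal.toReal_ofReal (by linarith)]
    rw [hr_def]; ring
  have HH := H x r hrpos hxδ hrδ
  rw [hvol, hball] at HH
  set J : ℝ := ∫ ξ in Set.Ioo p q', g ξ ∂ν with hJ_def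
  set I : ℝ := ∫ ξ in Set.Ioo q q', g ξ ∂ν with hI_def
  have hdec : J = (f q - f p) + I := by
    rw [hJ_def, decomp ν hg hg1 hpq hqq', hμf p q hpq]
  have hIbd : |I| ≤ (ν (Set.Ioc q q')).toReal := by
    refine (int_bound ν hg1 _).trans ?_
    exact ENNReal.toReal_mono (fin_Ioc ν q q').ne (measure_mono Set.Ioo_subset_Ioc_self)
  have hIbd2 : |I| < η₂ := lt_of_le_of_lt hIbd hν
  have hEid : f q - f p - L * (q - p) = (J - L * (q' - p)) - I + L * (q' - q) := by
    rw [hdec]; ring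
  have habs : |f q - f p - L * (q - p)| ≤ |J - L * (q' - p)| + |I| + |L| * (q' - q) := by
    rw [hEid]
    calc |(J - L * (q' - p)) - I + L * (q' - q)|
        ≤ |(J - L * (q' - p)) - I| + |L * (q' - q)| := abs_add_le _ _
      _ ≤ |J - L * (q' - p)| + |I| + |L * (q' - q)| := by
          have := abs_sub (J - L * (q' - p)) I
          linarith
      _ = |J - L * (q' - p)| + |I| + |L| * (q' - q) := by
          rw [abs_mul, abs_of_pos (by linarith : (0:ℝ) < q' - q)]
  have hmono : ε * (|x - x₀| + r) ≤ ε * (|p - x₀| + |q - x₀| + (q' - q)) := by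
    have h1 := le_abs_self (q' - x₀)
    have h2 := neg_abs_le (p - x₀)
    have h3 : |x - x₀| + r ≤ |p - x₀| + |q - x₀| + (q' - q) := by
      rw [hr_def];
      have := hxabs
      linarith [hq'abs]
    exact mul_le_mul_of_nonneg_left h3 hε.le
  have hp1 : ε * (q' - q) ≤ ε * η₂ := mul_le_mul_of_nonneg_left hq'q2 hε.le
  have hp2 : ε * η₂ ≤ ε * (q - p) := mul_le_mul_of_nonneg_left hη₂qp hε.le
  have hp3 : |L| * (q' - q) ≤ |L| * η₂ := mul_le_mul_of_nonneg_left hq'q2 (abs_nonneg L)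
  linarith [mul_nonneg hε.le (abs_nonneg (p - x₀)), mul_nonneg hε.le (abs_nonneg (q - x₀))]

end SigmaPtAux

/-- In one dimension, if `μ((a,b]) = f(b) - f(a)`, then f is differentiable at x₀ with
`f'(x₀) = L` iff x₀ is a σ-point of μ with `D_σ μ(x₀) = L`. -/
theorem stmt12 (ν : Measure ℝ) [IsLocallyFiniteMeasure ν]
    (g : ℝ → ℝ) (hg : Measurable g) (hg1 : ∀ ξ, |g ξ| = 1)
    (f : ℝ → ℝ)
    (hμf : ∀ a b : ℝ, a < b → (∫ ξ in Set.Ioc a b, g ξ ∂ν) = f b - f a)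
    (x₀ L : ℝ) :
    HasDerivAt f L x₀ ↔ IsSigmaPtR ν g x₀ L := by
  constructor
  · -- forward direction
    intro hd ε hε
    have h4 : (0:ℝ) < ε / 4 := by positivity
    have hlo := (hasDerivAt_iff_isLittleO.mp hd).def h4
    rw [Metric.eventually_nhds_iff] at hlo
    obtain ⟨δ₀, hδ₀, hB⟩ := hlo
    have hB' : ∀ y : ℝ, |y - x₀| < δ₀ → |f y - f x₀ - L * (y - x₀)| ≤ ε / 4 * |y - x₀| := by
      intro y hy
      have hmc : f y - f x₀ - L * (y - x₀) = f y - f x₀ - (y - x₀) • L := by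
        simp [smul_eq_mul]; ring
      rw [hmc]
      have h := hB (show dist y x₀ < δ₀ by rwa [Real.dist_eq])
      simpa [Real.norm_eq_abs] using h
    refine ⟨δ₀ / 2, by positivity, fun x r hr hx hrδ => ?_⟩
    have hLpos : (0:ℝ) < 1 + |L| := by positivity
    set a : ℝ := x - r with ha_def
    set b : ℝ := x + r with hb_def
    have hab : a < b := by rw [ha_def, hb_def]; linarith
    set η : ℝ := min r (ε * r / (4 * (1 + |L|))) with hη_def
    have hηpos : 0 < η := lt_min hr (div_pos (mul_pos hε hr) (by positivity))
    obtain ⟨b', hab', hb'b, hνb', hbb'⟩ := SigmaPtAux.approx_left ν a b hab η hηpos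
    have hball : ball x r = Set.Ioo a b := by rw [Real.ball_eq_Ioo, ha_def, hb_def]
    have hvol : (volume (ball x r)).toReal = 2 * r := by
      rw [Real.volume_ball, ENNReal.toReal_ofReal (by linarith)]
    have hdec : (∫ ξ in Set.Ioo a b, g ξ ∂ν) = (f b' - f a) + ∫ ξ in Set.Ioo b' b, g ξ ∂ν := by
      rw [SigmaPtAux.decomp ν hg hg1 hab' hb'b, hμf a b' hab']
    set I : ℝ := ∫ ξ in Set.Ioo b' b, g ξ ∂ν with hI_def
    have hIbd : |I| < η := lt_of_le_of_lt (SigmaPtAux.int_bound ν hg1 _) hνb'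
    have hxa := neg_abs_le (x - x₀)
    have hxb := le_abs_self (x - x₀)
    have haabs : |a - x₀| ≤ |x - x₀| + r := by
      rw [ha_def, abs_le]
      constructor <;> linarith
    have h1 : x - r < b' := by rw [← ha_def]; exact hab'
    have h2 : b' < x + r := by rw [← hb_def]; exact hb'b
    have hb'abs : |b' - x₀| ≤ |x - x₀| + r := by
      rw [abs_le]
      constructor <;> linarith
    have hxr : |x - x₀| + r < δ₀ := by linarith
    have hT1 := hB' b' (lt_of_le_of_lt hb'abs hxr)
    have hT2 := hB' a (lt_of_le_of_lt haabs hxr)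
    have hT1' : |f b' - f x₀ - L * (b' - x₀)| ≤ ε / 4 * (|x - x₀| + r) :=
      hT1.trans (mul_le_mul_of_nonneg_left hb'abs (by positivity))
    have hT2' : |f a - f x₀ - L * (a - x₀)| ≤ ε / 4 * (|x - x₀| + r) :=
      hT2.trans (mul_le_mul_of_nonneg_left haabs (by positivity))
    have hηL : η * (1 + |L|) ≤ ε * r / 4 := by
      calc η * (1 + |L|) ≤ (ε * r / (4 * (1 + |L|))) * (1 + |L|) := by
            gcongr
            exact min_le_right _ _
        _ = ε * r / 4 := by field_simp
    have hkey : (∫ ξ in ball x r, g ξ ∂ν) - L * (volume (ball x r)).toReal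
        = (f b' - f x₀ - L * (b' - x₀)) - (f a - f x₀ - L * (a - x₀)) + I + L * (b' - b) := by
      rw [hvol, hball, hdec, ha_def, hb_def]; ring
    rw [hkey]
    have habs2 : |(f b' - f x₀ - L * (b' - x₀)) - (f a - f x₀ - L * (a - x₀)) + I + L * (b' - b)|
        ≤ |f b' - f x₀ - L * (b' - x₀)| + |f a - f x₀ - L * (a - x₀)| + |I| + |L| * (b - b') := by
      calc |(f b' - f x₀ - L * (b' - x₀)) - (f a - f x₀ - L * (a - x₀)) + I + L * (b' - b)|
          ≤ |(f b' - f x₀ - L * (b' - x₀)) - (f a - f x₀ - L * (a - x₀)) + I| + |L * (b' - b)| :=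
            abs_add_le _ _
        _ ≤ |(f b' - f x₀ - L * (b' - x₀)) - (f a - f x₀ - L * (a - x₀))| + |I| + |L * (b' - b)| := by
            linarith [abs_add_le ((f b' - f x₀ - L * (b' - x₀)) - (f a - f x₀ - L * (a - x₀))) I]
        _ ≤ |f b' - f x₀ - L * (b' - x₀)| + |f a - f x₀ - L * (a - x₀)| + |I| + |L * (b' - b)| := by
            linarith [abs_sub (f b' - f x₀ - L * (b' - x₀)) (f a - f x₀ - L * (a - x₀))]
        _ = |f b' - f x₀ - L * (b' - x₀)| + |f a - f x₀ - L * (a - x₀)| + |I| + |L| * (b - b') := by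
            rw [abs_mul, abs_sub_comm b' b, abs_of_pos (show (0:ℝ) < b - b' by linarith)]
    have hLbb : |L| * (b - b') ≤ |L| * η := mul_le_mul_of_nonneg_left hbb'.le (abs_nonneg L)
    have hεr : 0 < ε * r := mul_pos hε hr
    have hεx : 0 ≤ ε * |x - x₀| := mul_nonneg hε.le (abs_nonneg _)
    linarith [habs2, hT1', hT2', hIbd, hLbb, hηL]
  · -- backward direction
    intro h
    rw [hasDerivAt_iff_isLittleO, Asymptotics.isLittleO_iff]
    intro c hc
    obtain ⟨δ, hδ, H⟩ := h (c / 8) (by positivity)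
    filter_upwards [Metric.ball_mem_nhds x₀ (show (0:ℝ) < δ / 2 by positivity)] with y hy
    rw [Metric.mem_ball, Real.dist_eq] at hy
    simp only [Real.norm_eq_abs, smul_eq_mul]
    rcases lt_trichotomy y x₀ with hlt | heq | hgt
    · -- y < x₀
      have hest := SigmaPtAux.Ioc_est ν hg hg1 f hμf x₀ L (c/8) δ (by positivity) hδ H
        y x₀ hlt hy (by simpa using half_pos hδ)
      have hneg : f x₀ - f y - L * (x₀ - y) = -(f y - f x₀ - (y - x₀) * L) := by ring
      rw [hneg, abs_neg] at hest
      refine hest.trans ?_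
      have hyx : |y - x₀| = x₀ - y := by rw [abs_of_neg (by linarith : y - x₀ < 0)]; ring
      rw [hyx]
      simp only [sub_self, abs_zero]
      nlinarith [mul_pos hc (show (0:ℝ) < x₀ - y by linarith)]
    · subst heq; simp
    · -- x₀ < y
      have hest := SigmaPtAux.Ioc_est ν hg hg1 f hμf x₀ L (c/8) δ (by positivity) hδ H
        x₀ y hgt (by simpa using half_pos hδ) hy
      have he : f y - f x₀ - L * (y - x₀) = f y - f x₀ - (y - x₀) * L := by ring
      rw [he] at hest
      refine hest.trans ?_
      have hyx : |y - x₀| = y - x₀ := abs_of_pos (by linarith)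
      rw [hyx]
      simp only [sub_self, abs_zero]
      nlinarith [mul_pos hc (show (0:ℝ) < y - x₀ by linarith)]

end
end

section
/- Let μ be a locally finite signed Borel measure on ℝ and let f : ℝ → ℝ be a function (of locally bounded variation) such that μ((a,b]) = f(b) − f(a) for all real a < b. Then for x₀ ∈ ℝ and L ∈ ℝ: f is differentiable at x₀ with f′(x₀) = L if and only if the strong derivative of μ at x₀ exists and equals L. -/
open MeasureTheory Metric Filter
open scoped ENNReal Topology NNReal

noncomputable section

/-- The locally finite signed measure dμ = g dν on ℝ has strong derivative L at x₀:
for every bounded open interval (open ball) B = B(y,s), `μ(x₀ + rB)/m(rB) → L` as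
`r → 0⁺`; here `x₀ + r·B(y,s) = B(x₀ + ry, rs)`. -/
def HasStrongDerivR (ν : Measure ℝ) (g : ℝ → ℝ) (x₀ : ℝ) (L : ℝ) : Prop :=
  ∀ (y s : ℝ), 0 < s →
    Tendsto (fun r : ℝ =>
        (∫ ξ in ball (x₀ + r * y) (r * s), g ξ ∂ν) /
          (volume (ball (x₀ + r * y) (r * s))).toReal)
      (𝓝[>] 0) (𝓝 L)

lemma nufin {ν : Measure ℝ} [IsLocallyFiniteMeasure ν] {s : Set ℝ} {a b : ℝ}
    (h : s ⊆ Set.Icc a b) : ν s ≠ ∞ :=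
  ((measure_mono h).trans_lt (isCompact_Icc.measure_lt_top)).ne

lemma gIntOn {ν : Measure ℝ} {g : ℝ → ℝ} (hg : Measurable g) (hg1 : ∀ ξ, |g ξ| = 1)
    {s : Set ℝ} (hν : ν s ≠ ∞) : IntegrableOn g s ν := by
  refine ⟨hg.aestronglyMeasurable.restrict, ?_⟩
  have h1 : ∀ ξ, (‖g ξ‖₊ : ℝ≥0∞) = 1 := by
    intro ξ
    have h2 : ‖g ξ‖ = 1 := by rw [Real.norm_eq_abs, hg1]
    simp [← norm_toNNReal, h2]
  have : HasFiniteIntegral g (ν.restrict s) := by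
    rw [HasFiniteIntegral]
    calc ∫⁻ ξ, ‖g ξ‖₊ ∂(ν.restrict s) = ∫⁻ _, 1 ∂(ν.restrict s) := by simp [h1]
      _ = ν s := by simp
      _ < ∞ := hν.lt_top
  exact this

lemma gAbsInt {ν : Measure ℝ} {g : ℝ → ℝ} (hg : Measurable g) (hg1 : ∀ ξ, |g ξ| = 1)
    {s : Set ℝ} (hν : ν s ≠ ∞) : |∫ ξ in s, g ξ ∂ν| ≤ (ν s).toReal := by
  rw [← Real.norm_eq_abs]
  calc ‖∫ ξ in s, g ξ ∂ν‖ ≤ 1 * (ν s).toReal := by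
        apply norm_setIntegral_le_of_norm_le_const hν.lt_top
        · intro x _; rw [Real.norm_eq_abs, hg1]
      _ = (ν s).toReal := one_mul _

lemma split1 {ν : Measure ℝ} [IsLocallyFiniteMeasure ν] {g : ℝ → ℝ} (hg : Measurable g)
    (hg1 : ∀ ξ, |g ξ| = 1) {a b : ℝ} (hab : a < b) :
    (∫ ξ in Set.Ioc a b, g ξ ∂ν) = (∫ ξ in Set.Ioo a b, g ξ ∂ν) + (ν {b}).toReal * g b := by
  have hd : Disjoint (Set.Ioo a b) ({b} : Set ℝ) := by
    rw [Set.disjoint_left]; rintro x hx rfl; exact lt_irrefl x hx.2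
  rw [← Set.Ioo_union_right hab,
    setIntegral_union hd (measurableSet_singleton b)
      (gIntOn hg hg1 (nufin (Set.Ioo_subset_Icc_self : Set.Ioo a b ⊆ Set.Icc a b)))
      (gIntOn hg hg1 (nufin (Set.singleton_subset_iff.2 (Set.mem_Icc.2 ⟨hab.le, le_refl b⟩)))),
    integral_singleton]
  simp [mul_comm]
  exact Or.inl rfl

lemma split2 {ν : Measure ℝ} [IsLocallyFiniteMeasure ν] {g : ℝ → ℝ} (hg : Measurable g)
    (hg1 : ∀ ξ, |g ξ| = 1) {a b c : ℝ} (hab : a < b) (hbc : b < c) :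
    (∫ ξ in Set.Ioo a c, g ξ ∂ν)
      = (∫ ξ in Set.Ioc a b, g ξ ∂ν) + (∫ ξ in Set.Ioo b c, g ξ ∂ν) := by
  have hd : Disjoint (Set.Ioc a b) (Set.Ioo b c) := by
    rw [Set.disjoint_left]; rintro x hx hx'; exact absurd hx.2 (not_le.2 hx'.1)
  rw [← Set.Ioc_union_Ioo_eq_Ioo hab.le hbc,
    setIntegral_union hd measurableSet_Ioo
      (gIntOn hg hg1 (nufin (Set.Ioc_subset_Icc_self : Set.Ioc a b ⊆ Set.Icc a b)))
      (gIntOn hg hg1 (nufin (Set.Ioo_subset_Icc_self : Set.Ioo b c ⊆ Set.Icc b c)))]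

lemma atom_small {ν : Measure ℝ} [IsLocallyFiniteMeasure ν] {g : ℝ → ℝ} (hg : Measurable g)
    (hg1 : ∀ ξ, |g ξ| = 1) {f : ℝ → ℝ}
    (hμf : ∀ a b : ℝ, a < b → (∫ ξ in Set.Ioc a b, g ξ ∂ν) = f b - f a)
    {x₀ L : ℝ} (hf : HasDerivAt f L x₀) {ε : ℝ} (hε : 0 < ε) :
    ∀ᶠ p in 𝓝 x₀, (ν {p}).toReal ≤ ε * |p - x₀| := by
  have hlo := (hasDerivAt_iff_isLittleO.mp hf).def (half_pos hε)
  rw [Metric.eventually_nhds_iff_ball] at hlo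
  obtain ⟨δ, hδ, hb⟩ := hlo
  rw [Metric.eventually_nhds_iff_ball]
  refine ⟨δ/2, half_pos hδ, fun p hp => ?_⟩
  have hpδ : |p - x₀| < δ/2 := by simpa [Real.dist_eq] using hp
  set c : ℕ → ℝ := fun n => 1/(n+1) with hc
  have hcpos : ∀ n : ℕ, 0 < c n := fun n => by positivity
  have hc0 : Tendsto c atTop (𝓝 0) := tendsto_one_div_add_atTop_nhds_zero_nat
  have key : ∀ n, (ν {p}).toReal ≤ |f p - f (p - c n)| + (ν (Set.Ioo (p - c n) p)).toReal := by
    intro n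
    have hab : p - c n < p := by linarith [hcpos n]
    have hs := split1 hg hg1 hab (ν := ν)
    rw [hμf _ _ hab] at hs
    have heq : (ν {p}).toReal * g p
        = (f p - f (p - c n)) - (∫ ξ in Set.Ioo (p - c n) p, g ξ ∂ν) := by linarith [hs]
    calc (ν {p}).toReal = |(ν {p}).toReal * g p| := by
          rw [abs_mul, hg1, mul_one, abs_of_nonneg ENNReal.toReal_nonneg]
      _ = |(f p - f (p - c n)) - (∫ ξ in Set.Ioo (p - c n) p, g ξ ∂ν)| := by rw [heq]
      _ ≤ |f p - f (p - c n)| + |∫ ξ in Set.Ioo (p - c n) p, g ξ ∂ν| := abs_sub _ _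
      _ ≤ |f p - f (p - c n)| + (ν (Set.Ioo (p - c n) p)).toReal := by
          gcongr
          exact gAbsInt hg hg1 (nufin Set.Ioo_subset_Icc_self)
  have hInter : (⋂ n, Set.Ioo (p - c n) p) = (∅ : Set ℝ) := by
    ext x
    simp only [Set.mem_iInter, Set.mem_Ioo, Set.mem_empty_iff_false, iff_false, not_forall]
    by_cases hx : x < p
    · obtain ⟨n, hn⟩ := exists_nat_one_div_lt (sub_pos.2 hx)
      refine ⟨n, fun h => ?_⟩
      have := h.1
      simp only [hc] at this
      linarith [hn]
    · exact ⟨0, fun h => hx h.2⟩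
  have hanti : Antitone (fun n => Set.Ioo (p - c n) p) := by
    intro m n hmn
    apply Set.Ioo_subset_Ioo_left
    have h4 : c n ≤ c m := by
      apply one_div_le_one_div_of_le (by positivity)
      have : (m : ℝ) ≤ n := Nat.cast_le.2 hmn
      linarith
    linarith
  have hν0 : Tendsto (fun n => (ν (Set.Ioo (p - c n) p)).toReal) atTop (𝓝 0) := by
    have h1 : Tendsto (fun n => ν (Set.Ioo (p - c n) p)) atTop (𝓝 0) := by
      have := tendsto_measure_iInter_atTop (μ := ν)
        (fun n => measurableSet_Ioo.nullMeasurableSet) hanti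
        ⟨0, nufin Set.Ioo_subset_Icc_self⟩
      rwa [hInter, measure_empty] at this
    have h2 := (ENNReal.tendsto_toReal (by simp : (0:ℝ≥0∞) ≠ ⊤)).comp h1
    exact h2
  have hev : ∀ᶠ n in atTop, |f p - f (p - c n)|
      ≤ ε/2 * |p - x₀| + ε/2 * |p - c n - x₀| + |L| * c n := by
    filter_upwards [hc0.eventually_lt_const (half_pos hδ)] with n hn
    have hball : p - c n ∈ ball x₀ δ := by
      simp only [mem_ball, Real.dist_eq]
      have h3 : p - c n - x₀ = (p - x₀) + (-(c n)) := by ring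
      rw [h3]
      calc |(p - x₀) + (-(c n))| ≤ |p - x₀| + |(-(c n))| := abs_add_le _ _
        _ = |p - x₀| + c n := by rw [abs_neg, abs_of_pos (hcpos n)]
        _ < δ/2 + δ/2 := add_lt_add hpδ hn
        _ = δ := by ring
    have h1 : |f p - f x₀ - (p - x₀) * L| ≤ ε/2 * |p - x₀| := by
      have hpball : p ∈ ball x₀ δ := by
        simp only [mem_ball, Real.dist_eq]; linarith
      simpa [Real.norm_eq_abs, smul_eq_mul] using hb p hpball
    have h2 : |f (p - c n) - f x₀ - (p - c n - x₀) * L| ≤ ε/2 * |p - c n - x₀| := by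
      simpa [Real.norm_eq_abs, smul_eq_mul] using hb (p - c n) hball
    have heq : f p - f (p - c n)
        = (f p - f x₀ - (p - x₀) * L) - (f (p - c n) - f x₀ - (p - c n - x₀) * L)
          + L * c n := by ring
    rw [heq]
    calc |(f p - f x₀ - (p - x₀) * L) - (f (p - c n) - f x₀ - (p - c n - x₀) * L) + L * c n|
        ≤ |(f p - f x₀ - (p - x₀) * L) - (f (p - c n) - f x₀ - (p - c n - x₀) * L)|
          + |L * c n| := abs_add_le _ _
      _ ≤ |f p - f x₀ - (p - x₀) * L| + |f (p - c n) - f x₀ - (p - c n - x₀) * L|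
          + |L * c n| := by gcongr ?_ + _; exact abs_sub _ _
      _ ≤ ε/2 * |p - x₀| + ε/2 * |p - c n - x₀| + |L| * c n := by
          rw [abs_mul, abs_of_pos (hcpos n)]
          exact add_le_add (add_le_add h1 h2) le_rfl
  have hD : Tendsto (fun n => (ε/2 * |p - x₀| + ε/2 * |p - c n - x₀| + |L| * c n)
      + (ν (Set.Ioo (p - c n) p)).toReal) atTop (𝓝 (ε * |p - x₀|)) := by
    have hc' : Tendsto (fun n => |p - c n - x₀|) atTop (𝓝 |p - x₀|) := by
      have h5 : Tendsto (fun n => p - c n - x₀) atTop (𝓝 (p - 0 - x₀)) :=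
        (tendsto_const_nhds.sub hc0).sub tendsto_const_nhds
      simpa using h5.abs
    have h6 : Tendsto (fun n => (ε/2 * |p - x₀| + ε/2 * |p - c n - x₀| + |L| * c n)
        + (ν (Set.Ioo (p - c n) p)).toReal) atTop
        (𝓝 ((ε/2 * |p - x₀| + ε/2 * |p - x₀| + |L| * 0) + 0)) :=
      ((tendsto_const_nhds.add (hc'.const_mul (ε/2))).add (hc0.const_mul |L|)).add hν0
    convert h6 using 2
    ring
  apply ge_of_tendsto hD
  filter_upwards [hev] with n hn
  exact le_trans (key n) (add_le_add hn le_rfl)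

set_option maxHeartbeats 1000000 in
/-- In one dimension, if `μ((a,b]) = f(b) - f(a)`, then f is differentiable at x₀ with
`f'(x₀) = L` iff μ has strong derivative L at x₀. -/
theorem stmt13 (ν : Measure ℝ) [IsLocallyFiniteMeasure ν]
    (g : ℝ → ℝ) (hg : Measurable g) (hg1 : ∀ ξ, |g ξ| = 1)
    (f : ℝ → ℝ)
    (hμf : ∀ a b : ℝ, a < b → (∫ ξ in Set.Ioc a b, g ξ ∂ν) = f b - f a)
    (x₀ L : ℝ) :
    HasDerivAt f L x₀ ↔ HasStrongDerivR ν g x₀ L := by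
  constructor
  · -- forward
    intro hf y s hs
    -- slopes
    have hφ : HasDerivAt (fun r : ℝ => f (x₀ + r * (y + s))) (L * (y + s)) 0 := by
      have hinner : HasDerivAt (fun r : ℝ => x₀ + r * (y + s)) (y + s) 0 := by
        simpa using ((hasDerivAt_id (0:ℝ)).mul_const (y + s)).const_add x₀
      have hf' : HasDerivAt f L ((fun r : ℝ => x₀ + r * (y + s)) 0) := by simpa using hf
      exact hf'.comp 0 hinner
    have hψ : HasDerivAt (fun r : ℝ => f (x₀ + r * (y - s))) (L * (y - s)) 0 := by
      have hinner : HasDerivAt (fun r : ℝ => x₀ + r * (y - s)) (y - s) 0 := by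
        simpa using ((hasDerivAt_id (0:ℝ)).mul_const (y - s)).const_add x₀
      have hf' : HasDerivAt f L ((fun r : ℝ => x₀ + r * (y - s)) 0) := by simpa using hf
      exact hf'.comp 0 hinner
    have hmono : 𝓝[>] (0:ℝ) ≤ 𝓝[≠] (0:ℝ) :=
      nhdsWithin_mono 0 (fun x hx => ne_of_gt hx)
    have hφt := (hasDerivAt_iff_tendsto_slope.mp hφ).mono_left hmono
    have hψt := (hasDerivAt_iff_tendsto_slope.mp hψ).mono_left hmono
    have h1 : Tendsto (fun r : ℝ =>
        (slope (fun r : ℝ => f (x₀ + r * (y + s))) 0 r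
          - slope (fun r : ℝ => f (x₀ + r * (y - s))) 0 r) / (2*s))
        (𝓝[>] 0) (𝓝 ((L * (y + s) - L * (y - s)) / (2*s))) :=
      (hφt.sub hψt).div_const _
    -- atom term
    have hterm2 : Tendsto (fun r : ℝ =>
        (ν {x₀ + r*(y+s)}).toReal * g (x₀ + r*(y+s)) / (2*(r*s)))
        (𝓝[>] 0) (𝓝 0) := by
      rw [Metric.tendsto_nhds]
      intro ε hε
      have hε' : 0 < ε * s / (|y+s| + 1) := by positivity
      have hatom := atom_small hg hg1 hμf hf hε'
      have hcont : Tendsto (fun r : ℝ => x₀ + r*(y+s)) (𝓝[>] 0) (𝓝 x₀) := by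
        have h0 : Continuous (fun r : ℝ => x₀ + r*(y+s)) := continuous_const.add (continuous_id.mul continuous_const)
        have := (h0.tendsto 0).mono_left (nhdsWithin_le_nhds (s := Set.Ioi (0:ℝ)))
        simpa using this
      filter_upwards [hcont.eventually hatom, self_mem_nhdsWithin] with r hr hrpos
      have hrpos' : (0:ℝ) < r := hrpos
      rw [Real.dist_eq, sub_zero]
      have habs : |(ν {x₀ + r*(y+s)}).toReal * g (x₀ + r*(y+s)) / (2*(r*s))|
          = (ν {x₀ + r*(y+s)}).toReal / (2*(r*s)) := by
        rw [abs_div, abs_mul, hg1, mul_one, abs_of_nonneg ENNReal.toReal_nonneg,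
          abs_of_pos (by positivity)]
      rw [habs]
      have h3 : |x₀ + r*(y+s) - x₀| = r * |y+s| := by
        rw [add_sub_cancel_left, abs_mul, abs_of_pos hrpos']
      have h2 : (ν {x₀ + r*(y+s)}).toReal ≤ ε * s / (|y+s| + 1) * (r * |y+s|) := by
        have := hr
        rwa [h3] at this
      have hA : (0:ℝ) ≤ |y+s| := abs_nonneg _
      calc (ν {x₀ + r*(y+s)}).toReal / (2*(r*s))
          ≤ (ε * s / (|y+s| + 1) * (r * |y+s|)) / (2*(r*s)) := by gcongr
        _ = ε * |y+s| / ((|y+s| + 1) * 2) := by field_simp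
        _ < ε := by
            rw [div_lt_iff₀ (by positivity)]
            nlinarith
    have hmain := h1.sub hterm2
    have hval : (L * (y + s) - L * (y - s)) / (2*s) - 0 = L := by field_simp; ring
    rw [hval] at hmain
    refine hmain.congr' ?_
    filter_upwards [self_mem_nhdsWithin] with r hrpos
    have hr : (0:ℝ) < r := hrpos
    have hab : x₀ + r*(y-s) < x₀ + r*(y+s) := by nlinarith
    have e1 : ball (x₀ + r*y) (r*s) = Set.Ioo (x₀ + r*(y-s)) (x₀ + r*(y+s)) := by
      rw [Real.ball_eq_Ioo]; congr 1 <;> ring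
    have v1 : (volume (Set.Ioo (x₀ + r*(y-s)) (x₀ + r*(y+s)))).toReal = 2*(r*s) := by
      rw [Real.volume_Ioo, show x₀ + r*(y+s) - (x₀ + r*(y-s)) = 2*(r*s) by ring]
      exact ENNReal.toReal_ofReal (by positivity)
    have hsplit := split1 hg hg1 hab (ν := ν) (g := g)
    rw [hμf _ _ hab] at hsplit
    rw [e1, v1]
    rw [slope_fun_def_field, slope_fun_def_field]
    have hIoo : (∫ ξ in Set.Ioo (x₀ + r*(y-s)) (x₀ + r*(y+s)), g ξ ∂ν)
        = (f (x₀ + r*(y+s)) - f (x₀ + r*(y-s)))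
          - (ν {x₀ + r*(y+s)}).toReal * g (x₀ + r*(y+s)) := by linarith
    rw [hIoo]
    simp only [mul_zero, add_zero, sub_zero]
    field_simp
    ring
  · -- backward
    intro hsd
    rw [hasDerivAt_iff_tendsto_slope, ← nhdsLT_sup_nhdsGT, tendsto_sup]
    constructor
    · -- left
      have H3 := hsd 0 1 one_pos
      have H4 := hsd (1/2) (1/2) (by norm_num)
      have hmain := (H3.const_mul 2).sub H4
      have hval : (2:ℝ)*L - L = L := by ring
      rw [hval] at hmain
      have key : Tendsto (fun r : ℝ => (f x₀ - f (x₀ - r))/r) (𝓝[>] 0) (𝓝 L) := by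
        refine hmain.congr' ?_
        filter_upwards [self_mem_nhdsWithin] with r hrpos
        have hr : (0:ℝ) < r := hrpos
        have e1 : ball (x₀ + r*0) (r*1) = Set.Ioo (x₀ - r) (x₀ + r) := by
          rw [Real.ball_eq_Ioo]; congr 1 <;> ring
        have e2 : ball (x₀ + r*(1/2)) (r*(1/2)) = Set.Ioo x₀ (x₀ + r) := by
          rw [Real.ball_eq_Ioo]; congr 1 <;> ring
        have v1 : (volume (Set.Ioo (x₀ - r) (x₀ + r))).toReal = 2*r := by
          rw [Real.volume_Ioo, show x₀ + r - (x₀ - r) = 2*r by ring]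
          exact ENNReal.toReal_ofReal (by positivity)
        have v2 : (volume (Set.Ioo x₀ (x₀ + r))).toReal = r := by
          rw [Real.volume_Ioo, show x₀ + r - x₀ = r by ring]
          exact ENNReal.toReal_ofReal (by positivity)
        have hsplit := split2 hg hg1 (show x₀ - r < x₀ by linarith)
          (show x₀ < x₀ + r by linarith) (ν := ν) (g := g)
        rw [hμf _ _ (show x₀ - r < x₀ by linarith)] at hsplit
        rw [e1, e2, v1, v2, hsplit]
        have hr' : r ≠ 0 := ne_of_gt hr
        have habstract : ∀ A B : ℝ, 2 * ((A + B)/(2*r)) - B/r = A/r := by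
          intro A B; field_simp; ring
        exact habstract _ _
      have hmap : Tendsto (fun z : ℝ => x₀ - z) (𝓝[<] x₀) (𝓝[>] (0:ℝ)) := by
        rw [tendsto_nhdsWithin_iff]
        constructor
        · have h0 : Continuous (fun z : ℝ => x₀ - z) := continuous_const.sub continuous_id
          have := (h0.tendsto x₀).mono_left (nhdsWithin_le_nhds (s := Set.Iio x₀))
          simpa using this
        · filter_upwards [self_mem_nhdsWithin] with z hz
          simpa [Set.mem_Ioi, sub_pos] using hz
      refine (key.comp hmap).congr' ?_
      filter_upwards [self_mem_nhdsWithin] with z hz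
      have hz' : z < x₀ := hz
      rw [slope_fun_def_field]
      simp only [Function.comp]
      have : x₀ - (x₀ - z) = z := by ring
      rw [this]
      rw [div_eq_div_iff (by linarith) (by linarith)]
      ring
    · -- right
      have H1 := hsd 1 1 one_pos
      have H2 := hsd (3/2) (1/2) (by norm_num)
      have hmain := (H1.const_mul 2).sub H2
      have hval : (2:ℝ)*L - L = L := by ring
      rw [hval] at hmain
      have key : Tendsto (fun r : ℝ => (f (x₀ + r) - f x₀)/r) (𝓝[>] 0) (𝓝 L) := by
        refine hmain.congr' ?_
        filter_upwards [self_mem_nhdsWithin] with r hrpos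
        have hr : (0:ℝ) < r := hrpos
        have e1 : ball (x₀ + r*1) (r*1) = Set.Ioo x₀ (x₀ + 2*r) := by
          rw [Real.ball_eq_Ioo]; congr 1 <;> ring
        have e2 : ball (x₀ + r*(3/2)) (r*(1/2)) = Set.Ioo (x₀ + r) (x₀ + 2*r) := by
          rw [Real.ball_eq_Ioo]; congr 1 <;> ring
        have v1 : (volume (Set.Ioo x₀ (x₀ + 2*r))).toReal = 2*r := by
          rw [Real.volume_Ioo, show x₀ + 2*r - x₀ = 2*r by ring]
          exact ENNReal.toReal_ofReal (by positivity)
        have v2 : (volume (Set.Ioo (x₀ + r) (x₀ + 2*r))).toReal = r := by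
          rw [Real.volume_Ioo, show x₀ + 2*r - (x₀ + r) = r by ring]
          exact ENNReal.toReal_ofReal (by positivity)
        have hsplit := split2 hg hg1 (show x₀ < x₀ + r by linarith)
          (show x₀ + r < x₀ + 2*r by linarith) (ν := ν) (g := g)
        rw [hμf _ _ (show x₀ < x₀ + r by linarith)] at hsplit
        rw [e1, e2, v1, v2, hsplit]
        have hr' : r ≠ 0 := ne_of_gt hr
        have habstract : ∀ A B : ℝ, 2 * ((A + B)/(2*r)) - B/r = A/r := by
          intro A B; field_simp; ring
        exact habstract _ _
      have hmap : Tendsto (fun z : ℝ => z - x₀) (𝓝[>] x₀) (𝓝[>] (0:ℝ)) := by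
        rw [tendsto_nhdsWithin_iff]
        constructor
        · have h0 : Continuous (fun z : ℝ => z - x₀) := continuous_id.sub continuous_const
          have := (h0.tendsto x₀).mono_left (nhdsWithin_le_nhds (s := Set.Ioi x₀))
          simpa using this
        · filter_upwards [self_mem_nhdsWithin] with z hz
          simpa [Set.mem_Ioi, sub_pos] using hz
      refine (key.comp hmap).congr' ?_
      filter_upwards [self_mem_nhdsWithin] with z hz
      rw [slope_fun_def_field]
      simp only [Function.comp]
      have : x₀ + (z - x₀) = z := by ring
      rw [this]

end
end

section
/- Let μ be a locally finite complex (or signed) Borel measure on ℝ and x₀ ∈ ℝ. Then x₀ is a σ-point of μ if and only if μ has a strong derivative at x₀, and in that case D_σμ(x₀) = Dμ(x₀). -/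
open MeasureTheory Metric Filter
open scoped ENNReal Topology NNReal

noncomputable section

/-- σ-point of the locally finite complex measure dμ = f dν on ℝ, with D_σ μ(x₀) = L. -/
def IsSigmaPtC (ν : Measure ℝ) (f : ℝ → ℂ) (x₀ : ℝ) (L : ℂ) : Prop :=
  ∀ ε > 0, ∃ δ > 0, ∀ (x r : ℝ), 0 < r → |x - x₀| < δ → r < δ →
    ‖(∫ ξ in ball x r, f ξ ∂ν) - L * ((volume (ball x r)).toReal : ℂ)‖ < ε * (|x - x₀| + r)

/-- The measure dμ = f dν on ℝ has strong derivative L at x₀. -/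
def HasStrongDerivC (ν : Measure ℝ) (f : ℝ → ℂ) (x₀ : ℝ) (L : ℂ) : Prop :=
  ∀ (y s : ℝ), 0 < s →
    Tendsto (fun r : ℝ =>
        (∫ ξ in ball (x₀ + r * y) (r * s), f ξ ∂ν) /
          ((volume (ball (x₀ + r * y) (r * s))).toReal : ℂ))
      (𝓝[>] 0) (𝓝 L)

section Aux

variable {ν : Measure ℝ} [IsLocallyFiniteMeasure ν] {f : ℝ → ℂ} {x₀ : ℝ} {L : ℂ}

lemma aux_integrableOn (hf : Measurable f) (hf1 : ∀ ξ, ‖f ξ‖ = 1) {s : Set ℝ}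
    (hs : ν s < ⊤) : IntegrableOn f s ν := by
  refine ⟨hf.aestronglyMeasurable.restrict, ?_⟩
  have h1 : ∀ ξ, (‖f ξ‖₊ : ℝ≥0∞) = 1 := by
    intro ξ
    have : ‖f ξ‖₊ = 1 := NNReal.coe_injective (by rw [coe_nnnorm, hf1, NNReal.coe_one])
    rw [this]; rfl
  rw [HasFiniteIntegral]
  simp only [enorm_eq_nnnorm, h1]
  rw [lintegral_one, Measure.restrict_apply_univ]
  exact hs

lemma aux_intOn_Ioo (hf : Measurable f) (hf1 : ∀ ξ, ‖f ξ‖ = 1) (a b : ℝ) :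
    IntegrableOn f (Set.Ioo a b) ν :=
  aux_integrableOn hf hf1 measure_Ioo_lt_top

lemma aux_intOn_Ico (hf : Measurable f) (hf1 : ∀ ξ, ‖f ξ‖ = 1) (a b : ℝ) :
    IntegrableOn f (Set.Ico a b) ν :=
  aux_integrableOn hf hf1 measure_Ico_lt_top

lemma aux_intOn_singleton (hf : Measurable f) (hf1 : ∀ ξ, ‖f ξ‖ = 1) (a : ℝ) :
    IntegrableOn f {a} ν := by
  refine aux_integrableOn hf hf1 ?_
  have : ({a} : Set ℝ) = Set.Icc a a := (Set.Icc_self a).symm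
  rw [this]
  exact measure_Icc_lt_top

/-- Additivity of the integral over a split interval. -/
lemma aux_split (hf : Measurable f) (hf1 : ∀ ξ, ‖f ξ‖ = 1) {a b c : ℝ}
    (h1 : a < b) (h2 : b < c) :
    (∫ ξ in Set.Ioo a c, f ξ ∂ν) =
      (∫ ξ in Set.Ioo a b, f ξ ∂ν) + (∫ ξ in ({b} : Set ℝ), f ξ ∂ν) +
        (∫ ξ in Set.Ioo b c, f ξ ∂ν) := by
  have e1 : Set.Ioo a c = Set.Ioo a b ∪ Set.Ico b c := (Set.Ioo_union_Ico_eq_Ioo h1 h2.le).symm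
  have e2 : Set.Ico b c = {b} ∪ Set.Ioo b c := by
    rw [← Set.Ioo_insert_left h2, Set.insert_eq]
  have d1 : Disjoint (Set.Ioo a b) (Set.Ico b c) := by
    rw [Set.disjoint_left]
    rintro x ⟨_, hx2⟩ ⟨hx3, _⟩
    linarith
  have d2 : Disjoint ({b} : Set ℝ) (Set.Ioo b c) := by
    rw [Set.disjoint_left]
    rintro x rfl ⟨hx, _⟩
    exact lt_irrefl _ hx
  rw [e1, setIntegral_union d1 measurableSet_Ico (aux_intOn_Ioo hf hf1 a b)
      (aux_intOn_Ico hf hf1 b c), e2,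
    setIntegral_union d2 measurableSet_Ioo (aux_intOn_singleton hf hf1 b)
      (aux_intOn_Ioo hf hf1 b c), add_assoc]

/-- The scaled-interval estimate coming from the strong derivative. -/
lemma aux_inst (h : HasStrongDerivC ν f x₀ L) {a b : ℝ} (hab : a < b) :
    ∀ ε > 0, ∃ δ > 0, ∀ r : ℝ, 0 < r → r < δ →
      ‖(∫ ξ in Set.Ioo (x₀ + r * a) (x₀ + r * b), f ξ ∂ν) - ((r * (b - a) : ℝ) : ℂ) * L‖
        ≤ ε * r := by
  intro ε hε
  have hs : 0 < (b - a) / 2 := by linarith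
  have H := h ((a + b) / 2) ((b - a) / 2) hs
  rw [Metric.tendsto_nhdsWithin_nhds] at H
  have hba : (0 : ℝ) < b - a := by linarith
  obtain ⟨δ, hδ, Hδ⟩ := H (ε / (b - a)) (by positivity)
  refine ⟨δ, hδ, fun r hr hrδ => ?_⟩
  have hball : ball (x₀ + r * ((a + b) / 2)) (r * ((b - a) / 2))
      = Set.Ioo (x₀ + r * a) (x₀ + r * b) := by
    rw [Real.ball_eq_Ioo]
    congr 1 <;> ring
  have hd := Hδ (Set.mem_Ioi.mpr hr) (by simpa [Real.dist_eq, abs_of_pos hr] using hrδ)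
  rw [dist_eq_norm, hball] at hd
  have hvol : (volume (Set.Ioo (x₀ + r * a) (x₀ + r * b))).toReal = r * (b - a) := by
    rw [Real.volume_Ioo, ENNReal.toReal_ofReal (by nlinarith)]
    ring
  rw [hvol] at hd
  set J := ∫ ξ in Set.Ioo (x₀ + r * a) (x₀ + r * b), f ξ ∂ν with hJ
  have hpos : (0 : ℝ) < r * (b - a) := by positivity
  have hne : ((r * (b - a) : ℝ) : ℂ) ≠ 0 := by
    exact_mod_cast hpos.ne'
  have key : J - ((r * (b - a) : ℝ) : ℂ) * L
      = ((r * (b - a) : ℝ) : ℂ) * (J / ((r * (b - a) : ℝ) : ℂ) - L) := by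
    rw [mul_sub (((r * (b - a) : ℝ) : ℂ)) (J / (((r * (b - a) : ℝ)) : ℂ)) L,
      mul_div_cancel₀ J hne]
  rw [key, norm_mul]
  have hnr : ‖((r * (b - a) : ℝ) : ℂ)‖ = r * (b - a) := by
    rw [Complex.norm_real, Real.norm_eq_abs, abs_of_pos hpos]
  rw [hnr]
  calc r * (b - a) * ‖J / ((r * (b - a) : ℝ) : ℂ) - L‖
      ≤ r * (b - a) * (ε / (b - a)) := by gcongr <;> exact hd.le
    _ = ε * r := by
        field_simp
        try ring

/-- Atom estimate: the measure of the moving singleton {x₀ + t w} is o(t). -/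
lemma aux_atom (hf : Measurable f) (hf1 : ∀ ξ, ‖f ξ‖ = 1)
    (h : HasStrongDerivC ν f x₀ L) (w : ℝ) :
    ∀ ε > 0, ∃ δ > 0, ∀ t : ℝ, 0 < t → t < δ →
      ‖∫ ξ in ({x₀ + t * w} : Set ℝ), f ξ ∂ν‖ ≤ ε * t := by
  intro ε hε
  have hε3 : 0 < ε / 3 := by positivity
  obtain ⟨δ₁, hδ₁, H1⟩ := aux_inst h (show w - 1 < w + 1 by linarith) (ε / 3) hε3
  obtain ⟨δ₂, hδ₂, H2⟩ := aux_inst h (show w - 1 < w by linarith) (ε / 3) hε3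
  obtain ⟨δ₃, hδ₃, H3⟩ := aux_inst h (show w < w + 1 by linarith) (ε / 3) hε3
  refine ⟨min δ₁ (min δ₂ δ₃), by positivity, fun t ht htδ => ?_⟩
  have ht1 : t < δ₁ := lt_of_lt_of_le htδ (min_le_left _ _)
  have ht2 : t < δ₂ := lt_of_lt_of_le htδ ((min_le_right _ _).trans (min_le_left _ _))
  have ht3 : t < δ₃ := lt_of_lt_of_le htδ ((min_le_right _ _).trans (min_le_right _ _))
  have h1 := H1 t ht ht1
  have h2 := H2 t ht ht2
  have h3 := H3 t ht ht3
  have hsplit := aux_split hf hf1 (ν := ν) (f := f)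
    (show x₀ + t * (w - 1) < x₀ + t * w by nlinarith)
    (show x₀ + t * w < x₀ + t * (w + 1) by nlinarith)
  set X := ∫ ξ in Set.Ioo (x₀ + t * (w - 1)) (x₀ + t * (w + 1)), f ξ ∂ν with hX
  set Y := ∫ ξ in Set.Ioo (x₀ + t * (w - 1)) (x₀ + t * w), f ξ ∂ν with hY
  set Z := ∫ ξ in Set.Ioo (x₀ + t * w) (x₀ + t * (w + 1)), f ξ ∂ν with hZ
  set A := ∫ ξ in ({x₀ + t * w} : Set ℝ), f ξ ∂ν with hA
  have hc1 : ((t * (w + 1 - (w - 1)) : ℝ) : ℂ) = ((2 * t : ℝ) : ℂ) := by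
    push_cast; ring
  have hc2 : ((t * (w - (w - 1)) : ℝ) : ℂ) = ((t : ℝ) : ℂ) := by
    push_cast; ring
  have hc3 : ((t * (w + 1 - w) : ℝ) : ℂ) = ((t : ℝ) : ℂ) := by
    push_cast; ring
  rw [hc1] at h1
  rw [hc2] at h2
  rw [hc3] at h3
  have hkey : A = (X - ((2 * t : ℝ) : ℂ) * L) - (Y - ((t : ℝ) : ℂ) * L)
      - (Z - ((t : ℝ) : ℂ) * L) := by
    have hcast : ((2 * t : ℝ) : ℂ) = ((t : ℝ) : ℂ) + ((t : ℝ) : ℂ) := by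
      push_cast; ring
    rw [hcast]
    linear_combination -hsplit
  rw [hkey]
  calc ‖(X - ((2 * t : ℝ) : ℂ) * L) - (Y - ((t : ℝ) : ℂ) * L) - (Z - ((t : ℝ) : ℂ) * L)‖
      ≤ ‖(X - ((2 * t : ℝ) : ℂ) * L) - (Y - ((t : ℝ) : ℂ) * L)‖
          + ‖Z - ((t : ℝ) : ℂ) * L‖ := norm_sub_le _ _
    _ ≤ ‖X - ((2 * t : ℝ) : ℂ) * L‖ + ‖Y - ((t : ℝ) : ℂ) * L‖
          + ‖Z - ((t : ℝ) : ℂ) * L‖ := by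
        gcongr
        exact norm_sub_le _ _
    _ ≤ ε / 3 * t + ε / 3 * t + ε / 3 * t := by gcongr
    _ = ε * t := by ring

/-- The atom at x₀ itself vanishes. -/
lemma aux_atom_zero (hf : Measurable f) (hf1 : ∀ ξ, ‖f ξ‖ = 1)
    (h : HasStrongDerivC ν f x₀ L) :
    (∫ ξ in ({x₀} : Set ℝ), f ξ ∂ν) = 0 := by
  obtain ⟨δ, hδ, H⟩ := aux_atom hf hf1 h 0 1 one_pos
  set A := ∫ ξ in ({x₀} : Set ℝ), f ξ ∂ν with hA
  have key : ∀ t : ℝ, 0 < t → t < δ → ‖A‖ ≤ t := by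
    intro t ht htδ
    have h' := H t ht htδ
    rw [show x₀ + t * (0 : ℝ) = x₀ by ring, one_mul] at h'
    exact h'
  by_contra hne
  have hpos : 0 < ‖A‖ := by
    rcases (norm_nonneg A).lt_or_eq with h' | h'
    · exact h'
    · exact absurd (norm_eq_zero.mp h'.symm) hne
  have ht0 : 0 < min (δ / 2) (‖A‖ / 2) := by positivity
  have h1 := key (min (δ / 2) (‖A‖ / 2)) ht0
    (lt_of_le_of_lt (min_le_left _ _) (by linarith))
  have h2 : min (δ / 2) (‖A‖ / 2) ≤ ‖A‖ / 2 := min_le_right _ _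
  linarith

end Aux

/-- In one dimension, x₀ is a σ-point of μ iff μ has a strong derivative at x₀, and
the two values agree. -/
theorem stmt14 (ν : Measure ℝ) [IsLocallyFiniteMeasure ν]
    (f : ℝ → ℂ) (hf : Measurable f) (hf1 : ∀ ξ, ‖f ξ‖ = 1)
    (x₀ : ℝ) (L : ℂ) :
    IsSigmaPtC ν f x₀ L ↔ HasStrongDerivC ν f x₀ L := by
  constructor
  · -- σ-point ⇒ strong derivative
    intro hσ y s hs
    rw [Metric.tendsto_nhdsWithin_nhds]
    intro ε hε
    have hys : 0 < |y| + s := by positivity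
    obtain ⟨δ, hδ, H⟩ := hσ (ε * s / (|y| + s)) (by positivity)
    refine ⟨δ / (|y| + s + 1), by positivity, fun r hr hrδ => ?_⟩
    have hr0 : 0 < r := Set.mem_Ioi.mp hr
    have hrd : r < δ / (|y| + s + 1) := by
      rwa [Real.dist_eq, sub_zero, abs_of_pos hr0] at hrδ
    have hrs : 0 < r * s := by positivity
    have hxx : |x₀ + r * y - x₀| = r * |y| := by
      rw [add_sub_cancel_left, abs_mul, abs_of_pos hr0]
    have hr1 : r * (|y| + s + 1) < δ := (lt_div_iff₀ (by positivity)).mp hrd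
    have hbd1 : |x₀ + r * y - x₀| < δ := by
      rw [hxx]
      nlinarith [hr1, mul_pos hr0 (show (0:ℝ) < s + 1 by linarith)]
    have hbd2 : r * s < δ := by
      nlinarith [hr1, mul_pos hr0 (show (0:ℝ) < s + 1 by linarith),
        mul_nonneg hr0.le (abs_nonneg y)]
    have hkey := H (x₀ + r * y) (r * s) hrs hbd1 hbd2
    rw [hxx] at hkey
    have hvol : (volume (ball (x₀ + r * y) (r * s))).toReal = 2 * (r * s) := by
      rw [Real.volume_ball, ENNReal.toReal_ofReal (by positivity)]
    rw [hvol] at hkey ⊢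
    set J := ∫ ξ in ball (x₀ + r * y) (r * s), f ξ ∂ν with hJ
    have hne : ((2 * (r * s) : ℝ) : ℂ) ≠ 0 := by
      exact_mod_cast (by positivity : (0 : ℝ) < 2 * (r * s)).ne'
    have hrne : ((r : ℝ) : ℂ) ≠ 0 := by exact_mod_cast hr0.ne'
    have hsne : ((s : ℝ) : ℂ) ≠ 0 := by exact_mod_cast hs.ne'
    have hid : J / ((2 * (r * s) : ℝ) : ℂ) - L
        = (J - L * ((2 * (r * s) : ℝ) : ℂ)) / ((2 * (r * s) : ℝ) : ℂ) := by
      rw [sub_div, mul_div_assoc, div_self hne, mul_one]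
    rw [dist_eq_norm, hid, norm_div]
    have hnr : ‖((2 * (r * s) : ℝ) : ℂ)‖ = 2 * (r * s) := by
      rw [Complex.norm_real, Real.norm_eq_abs, abs_of_pos (by positivity)]
    rw [hnr]
    rw [div_lt_iff₀ (by positivity)]
    calc ‖J - L * ((2 * (r * s) : ℝ) : ℂ)‖
        < ε * s / (|y| + s) * (r * |y| + r * s) := hkey
      _ ≤ ε * s * r := by
          rw [show r * |y| + r * s = r * (|y| + s) by ring]
          rw [div_mul_eq_mul_div, div_le_iff₀ hys]
          ring_nf
          nlinarith [abs_nonneg y]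
      _ < ε * (2 * (r * s)) := by nlinarith
  · -- strong derivative ⇒ σ-point
    intro h ε hε
    have hε4 : 0 < ε / 4 := by positivity
    obtain ⟨δP, hδP, HP⟩ := aux_inst h (show (0 : ℝ) < 1 by norm_num) (ε / 4) hε4
    obtain ⟨δQ, hδQ, HQ⟩ := aux_inst h (show (-1 : ℝ) < 0 by norm_num) (ε / 4) hε4
    obtain ⟨δA1, hδA1, HA1⟩ := aux_atom hf hf1 h 1 (ε / 4) hε4
    obtain ⟨δA2, hδA2, HA2⟩ := aux_atom hf hf1 h (-1) (ε / 4) hε4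
    have hA0 := aux_atom_zero hf hf1 h
    obtain ⟨δ, hδdef⟩ : ∃ δ, δ = min (min δP δQ) (min δA1 δA2) := ⟨_, rfl⟩
    have hδ0 : 0 < δ := by rw [hδdef]; positivity
    have hδP' : δ ≤ δP := hδdef ▸ (min_le_left _ _).trans (min_le_left _ _)
    have hδQ' : δ ≤ δQ := hδdef ▸ (min_le_left _ _).trans (min_le_right _ _)
    have hδA1' : δ ≤ δA1 := hδdef ▸ (min_le_right _ _).trans (min_le_left _ _)
    have hδA2' : δ ≤ δA2 := hδdef ▸ (min_le_right _ _).trans (min_le_right _ _)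
    refine ⟨δ / 4, by positivity, fun x r hr hx hrδ => ?_⟩
    obtain ⟨c, hc⟩ : ∃ c, c = x - x₀ := ⟨_, rfl⟩
    obtain ⟨u, hu⟩ : ∃ u, u = c - r := ⟨_, rfl⟩
    obtain ⟨v, hv⟩ : ∃ v, v = c + r := ⟨_, rfl⟩
    rw [← hc] at hx ⊢
    have hcub : c < δ / 4 := lt_of_le_of_lt (le_abs_self c) hx
    have hclb : -(δ / 4) < c := neg_lt_of_neg_lt (lt_of_le_of_lt (neg_le_abs c) hx)
    have hball : ball x r = Set.Ioo (x₀ + u) (x₀ + v) := by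
      rw [Real.ball_eq_Ioo]
      congr 1 <;> (subst hu hv hc; ring)
    have hvol : (volume (ball x r)).toReal = 2 * r := by
      rw [Real.volume_ball, ENNReal.toReal_ofReal (by positivity)]
    rw [hvol, hball]
    have hpos : 0 < |c| + r := by positivity
    have hεpos : 0 < ε * (|c| + r) := mul_pos hε hpos
    have huv : v - u = 2 * r := by rw [hu, hv]; ring
    have hule : u ≤ |c| + r := by
      have := le_abs_self c; rw [hu]; linarith
    have hvle : v ≤ |c| + r := by
      have := le_abs_self c; rw [hv]; linarith
    have hmule : -u ≤ |c| + r := by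
      have := neg_le_abs c; rw [hu]; linarith
    have hmvle : -v ≤ |c| + r := by
      have := neg_le_abs c; rw [hv]; linarith
    rcases lt_trichotomy 0 u with hu0 | hu0 | hu0
    · -- 0 < u : interval to the right of x₀
      have hv0 : 0 < v := by
        have : u < v := by linarith [huv]
        linarith
      have hvδ : v < δ := by rw [hv]; linarith
      have huδ : u < δ := by rw [hu]; linarith
      have hsplit := aux_split hf hf1 (ν := ν) (f := f)
        (show x₀ < x₀ + u by linarith) (show x₀ + u < x₀ + v by linarith [huv])
      have hPv := HP v hv0 (lt_of_lt_of_le hvδ hδP')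
      have hPu := HP u hu0 (lt_of_lt_of_le huδ hδP')
      have hAu := HA1 u hu0 (lt_of_lt_of_le huδ hδA1')
      simp only [mul_zero, add_zero, mul_one, sub_zero] at hPv hPu hAu
      have hkey : (∫ ξ in Set.Ioo (x₀ + u) (x₀ + v), f ξ ∂ν) - L * ((2 * r : ℝ) : ℂ)
          = ((∫ ξ in Set.Ioo x₀ (x₀ + v), f ξ ∂ν) - ((v : ℝ) : ℂ) * L)
            - ((∫ ξ in Set.Ioo x₀ (x₀ + u), f ξ ∂ν) - ((u : ℝ) : ℂ) * L)
            - (∫ ξ in ({x₀ + u} : Set ℝ), f ξ ∂ν) := by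
        have hcast : ((2 * r : ℝ) : ℂ) = ((v : ℝ) : ℂ) - ((u : ℝ) : ℂ) := by
          have h' : (2 * r : ℝ) = v - u := by linarith
          exact_mod_cast h'
        rw [hcast]
        linear_combination -hsplit
      rw [hkey]
      have hcabs : c ≤ |c| := le_abs_self c
      calc ‖((∫ ξ in Set.Ioo x₀ (x₀ + v), f ξ ∂ν) - ((v : ℝ) : ℂ) * L)
            - ((∫ ξ in Set.Ioo x₀ (x₀ + u), f ξ ∂ν) - ((u : ℝ) : ℂ) * L)
            - (∫ ξ in ({x₀ + u} : Set ℝ), f ξ ∂ν)‖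
          ≤ ‖((∫ ξ in Set.Ioo x₀ (x₀ + v), f ξ ∂ν) - ((v : ℝ) : ℂ) * L)
            - ((∫ ξ in Set.Ioo x₀ (x₀ + u), f ξ ∂ν) - ((u : ℝ) : ℂ) * L)‖
            + ‖∫ ξ in ({x₀ + u} : Set ℝ), f ξ ∂ν‖ := norm_sub_le _ _
        _ ≤ ‖(∫ ξ in Set.Ioo x₀ (x₀ + v), f ξ ∂ν) - ((v : ℝ) : ℂ) * L‖
            + ‖(∫ ξ in Set.Ioo x₀ (x₀ + u), f ξ ∂ν) - ((u : ℝ) : ℂ) * L‖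
            + ‖∫ ξ in ({x₀ + u} : Set ℝ), f ξ ∂ν‖ := by
              gcongr
              exact norm_sub_le _ _
        _ ≤ ε / 4 * v + ε / 4 * u + ε / 4 * u := by gcongr
        _ ≤ ε / 4 * (|c| + r) + ε / 4 * (|c| + r) + ε / 4 * (|c| + r) := by
              gcongr <;> linarith
        _ < ε * (|c| + r) := by linarith
    · -- u = 0
      have hv2r : v = 2 * r := by rw [← huv, ← hu0]; ring
      have hvδ : v < δ := by rw [hv2r]; linarith
      have hPv := HP v (by rw [hv2r]; positivity) (lt_of_lt_of_le hvδ hδP')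
      simp only [mul_zero, add_zero, mul_one, sub_zero] at hPv
      have hu0' : x₀ + u = x₀ := by rw [← hu0]; ring
      rw [hu0']
      have hcast : L * ((2 * r : ℝ) : ℂ) = ((v : ℝ) : ℂ) * L := by
        rw [show ((2 * r : ℝ) : ℂ) = ((v : ℝ) : ℂ) by exact_mod_cast hv2r.symm]
        ring
      rw [hcast]
      calc ‖(∫ ξ in Set.Ioo x₀ (x₀ + v), f ξ ∂ν) - ((v : ℝ) : ℂ) * L‖
          ≤ ε / 4 * v := hPv
        _ ≤ ε / 4 * (|c| + r) := by gcongr <;> linarith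
        _ < ε * (|c| + r) := by linarith
    · -- u < 0
      rcases lt_trichotomy 0 v with hv0 | hv0 | hv0
      · -- u < 0 < v : interval straddles x₀
        have hvδ : v < δ := by rw [hv]; linarith
        have hmuδ : -u < δ := by rw [hu]; linarith
        have hsplit := aux_split hf hf1 (ν := ν) (f := f)
          (show x₀ + u < x₀ by linarith) (show x₀ < x₀ + v by linarith)
        have hPv := HP v hv0 (lt_of_lt_of_le hvδ hδP')
        have hQu := HQ (-u) (by linarith) (lt_of_lt_of_le hmuδ hδQ')
        simp only [mul_zero, add_zero, mul_one, sub_zero, mul_neg_one, zero_sub, neg_neg,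
          mul_neg, ← sub_eq_add_neg] at hPv hQu
        rw [← mul_neg] at hQu
        rw [hA0] at hsplit
        have hkey : (∫ ξ in Set.Ioo (x₀ + u) (x₀ + v), f ξ ∂ν) - L * ((2 * r : ℝ) : ℂ)
            = ((∫ ξ in Set.Ioo (x₀ + u) x₀, f ξ ∂ν) - ((-u : ℝ) : ℂ) * L)
              + ((∫ ξ in Set.Ioo x₀ (x₀ + v), f ξ ∂ν) - ((v : ℝ) : ℂ) * L) := by
          have hcast : ((2 * r : ℝ) : ℂ) = ((-u : ℝ) : ℂ) + ((v : ℝ) : ℂ) := by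
            have h' : (2 * r : ℝ) = -u + v := by linarith
            exact_mod_cast h'
          rw [hcast]
          linear_combination hsplit
        rw [hkey]
        calc ‖((∫ ξ in Set.Ioo (x₀ + u) x₀, f ξ ∂ν) - ((-u : ℝ) : ℂ) * L)
              + ((∫ ξ in Set.Ioo x₀ (x₀ + v), f ξ ∂ν) - ((v : ℝ) : ℂ) * L)‖
            ≤ ‖(∫ ξ in Set.Ioo (x₀ + u) x₀, f ξ ∂ν) - ((-u : ℝ) : ℂ) * L‖
              + ‖(∫ ξ in Set.Ioo x₀ (x₀ + v), f ξ ∂ν) - ((v : ℝ) : ℂ) * L‖ := norm_add_le _ _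
          _ ≤ ε / 4 * (-u) + ε / 4 * v := by gcongr
          _ ≤ ε / 4 * (|c| + r) + ε / 4 * (|c| + r) := by gcongr <;> linarith
          _ < ε * (|c| + r) := by linarith
      · -- v = 0
        have hu2r : -u = 2 * r := by rw [← huv, ← hv0]; ring
        have hmuδ : -u < δ := by rw [hu2r]; linarith
        have hQu := HQ (-u) (by rw [hu2r]; positivity) (lt_of_lt_of_le hmuδ hδQ')
        simp only [mul_zero, add_zero, mul_one, sub_zero, mul_neg_one, zero_sub, neg_neg,
          mul_neg, ← sub_eq_add_neg] at hQu
        rw [← mul_neg] at hQu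
        have hv0' : x₀ + v = x₀ := by rw [← hv0]; ring
        rw [hv0']
        have hcast : L * ((2 * r : ℝ) : ℂ) = ((-u : ℝ) : ℂ) * L := by
          rw [show ((2 * r : ℝ) : ℂ) = ((-u : ℝ) : ℂ) by exact_mod_cast hu2r.symm]
          ring
        rw [hcast]
        calc ‖(∫ ξ in Set.Ioo (x₀ + u) x₀, f ξ ∂ν) - ((-u : ℝ) : ℂ) * L‖
            ≤ ε / 4 * (-u) := hQu
          _ ≤ ε / 4 * (|c| + r) := by gcongr <;> linarith
          _ < ε * (|c| + r) := by linarith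
      · -- v < 0 : interval to the left of x₀
        have hmuδ : -u < δ := by rw [hu]; linarith
        have hmvδ : -v < δ := by rw [hv]; linarith
        have hsplit := aux_split hf hf1 (ν := ν) (f := f)
          (show x₀ + u < x₀ + v by linarith [huv]) (show x₀ + v < x₀ by linarith)
        have hQu := HQ (-u) (by linarith [huv]) (lt_of_lt_of_le hmuδ hδQ')
        have hQv := HQ (-v) (by linarith) (lt_of_lt_of_le hmvδ hδQ')
        have hAv := HA2 (-v) (by linarith) (lt_of_lt_of_le hmvδ hδA2')
        simp only [mul_zero, add_zero, mul_one, sub_zero, mul_neg_one, zero_sub, neg_neg,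
          mul_neg, ← sub_eq_add_neg] at hQu hQv hAv
        rw [← mul_neg] at hQu
        rw [← mul_neg] at hQv
        rw [← mul_neg] at hAv
        have hkey : (∫ ξ in Set.Ioo (x₀ + u) (x₀ + v), f ξ ∂ν) - L * ((2 * r : ℝ) : ℂ)
            = ((∫ ξ in Set.Ioo (x₀ + u) x₀, f ξ ∂ν) - ((-u : ℝ) : ℂ) * L)
              - ((∫ ξ in Set.Ioo (x₀ + v) x₀, f ξ ∂ν) - ((-v : ℝ) : ℂ) * L)
              - (∫ ξ in ({x₀ + v} : Set ℝ), f ξ ∂ν) := by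
          have hcast : ((2 * r : ℝ) : ℂ) = ((-u : ℝ) : ℂ) - ((-v : ℝ) : ℂ) := by
            have h' : (2 * r : ℝ) = -u - -v := by linarith
            exact_mod_cast h'
          rw [hcast]
          linear_combination -hsplit
        rw [hkey]
        calc ‖((∫ ξ in Set.Ioo (x₀ + u) x₀, f ξ ∂ν) - ((-u : ℝ) : ℂ) * L)
              - ((∫ ξ in Set.Ioo (x₀ + v) x₀, f ξ ∂ν) - ((-v : ℝ) : ℂ) * L)
              - (∫ ξ in ({x₀ + v} : Set ℝ), f ξ ∂ν)‖
            ≤ ‖((∫ ξ in Set.Ioo (x₀ + u) x₀, f ξ ∂ν) - ((-u : ℝ) : ℂ) * L)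
              - ((∫ ξ in Set.Ioo (x₀ + v) x₀, f ξ ∂ν) - ((-v : ℝ) : ℂ) * L)‖
              + ‖∫ ξ in ({x₀ + v} : Set ℝ), f ξ ∂ν‖ := norm_sub_le _ _
          _ ≤ ‖(∫ ξ in Set.Ioo (x₀ + u) x₀, f ξ ∂ν) - ((-u : ℝ) : ℂ) * L‖
              + ‖(∫ ξ in Set.Ioo (x₀ + v) x₀, f ξ ∂ν) - ((-v : ℝ) : ℂ) * L‖
              + ‖∫ ξ in ({x₀ + v} : Set ℝ), f ξ ∂ν‖ := by
                gcongr
                exact norm_sub_le _ _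
          _ ≤ ε / 4 * (-u) + ε / 4 * (-v) + ε / 4 * (-v) := by gcongr
          _ ≤ ε / 4 * (|c| + r) + ε / 4 * (|c| + r) + ε / 4 * (|c| + r) := by
                gcongr <;> linarith
          _ < ε * (|c| + r) := by linarith

end
end
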